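/- arXiv:1112.1228 — 2 statements merged into one kernel-verified Lean document; each statement's English description precedes it below -/
import Mathlib

section
/- Let p be a prime. The number of Sylow p-subgroups of H is (p−1)!·(p−1)^{p−2}. -/
/-- The group `H`: pairs `(f, f')` with `f` a permutation of `ℤ/pℤ` and
`f' : ℤ/pℤ → ℤ/pℤ∖{0}` an arbitrary function (encoded as taking values in the
units `(ℤ/pℤ)ˣ`), with multiplication `(f,f')∘(g,g') = (f∘g, (f'∘g)·g')`. -/
@[ext]
structure Hgrp (p : ℕ) where
  perm : Equiv.Perm (ZMod p)
  der : ZMod p → (ZMod p)ˣ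

namespace Hgrp

instance (p : ℕ) : Group (Hgrp p) where
  mul a b := ⟨a.perm * b.perm, fun x => a.der (b.perm x) * b.der x⟩
  one := ⟨1, 1⟩
  inv a := ⟨a.perm⁻¹, fun x => (a.der (a.perm⁻¹ x))⁻¹⟩
  mul_assoc a b c := by
    refine Hgrp.ext (mul_assoc _ _ _) ?_
    funext x
    exact mul_assoc _ _ _
  one_mul a := by
    refine Hgrp.ext (one_mul _) ?_
    funext x
    exact one_mul _
  mul_one a := by
    refine Hgrp.ext (mul_one _) ?_
    funext x
    exact mul_one _
  inv_mul_cancel a := by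
    refine Hgrp.ext (inv_mul_cancel _) ?_
    funext x
    show (a.der (a.perm⁻¹ (a.perm x)))⁻¹ * a.der x = 1
    rw [show a.perm⁻¹ (a.perm x) = x from a.perm.symm_apply_apply x, inv_mul_cancel]

theorem mul_def {p : ℕ} (a b : Hgrp p) :
    a * b = ⟨a.perm * b.perm, fun x => a.der (b.perm x) * b.der x⟩ := rfl

theorem one_def {p : ℕ} : (1 : Hgrp p) = ⟨1, 1⟩ := rfl

end Hgrp

namespace HgrpAux

open Equiv Finset

variable {p : ℕ} [Fact p.Prime]

/-- `Hgrp p` is just a product as a type. -/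
def hEquiv (p : ℕ) : Hgrp p ≃ Equiv.Perm (ZMod p) × (ZMod p → (ZMod p)ˣ) where
  toFun a := (a.perm, a.der)
  invFun x := ⟨x.1, x.2⟩
  left_inv a := rfl
  right_inv x := rfl

instance : Fintype (Hgrp p) := Fintype.ofEquiv _ (hEquiv p).symm

theorem pow_perm (a : Hgrp p) (n : ℕ) : (a ^ n).perm = a.perm ^ n := by
  induction n with
  | zero => rfl
  | succ n ih => rw [pow_succ, pow_succ, ← ih]; rfl

theorem pow_der (a : Hgrp p) (n : ℕ) (x : ZMod p) :
    (a ^ n).der x = ∏ i ∈ Finset.range n, a.der ((a.perm ^ i) x) := by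
  induction n generalizing x with
  | zero => rfl
  | succ n ih =>
    calc (a ^ (n + 1)).der x = (a ^ n).der (a.perm x) * a.der x := rfl
      _ = (∏ i ∈ Finset.range n, a.der ((a.perm ^ (i + 1)) x)) * a.der ((a.perm ^ 0) x) := by
          rw [ih]
          congr 1
      _ = _ := (Finset.prod_range_succ' (fun k => a.der ((a.perm ^ k) x)) n).symm

theorem cardH : Nat.card (Hgrp p) = p.factorial * (p - 1) ^ p := by
  rw [Nat.card_eq_fintype_card, Fintype.card_congr (hEquiv p), Fintype.card_prod,
    Fintype.card_perm, Fintype.card_fun, ZMod.card, ZMod.card_units_eq_totient,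
    Nat.totient_prime Fact.out]

theorem no_fixed {σ : Equiv.Perm (ZMod p)} (h : orderOf σ = p) (z : ZMod p) : σ z ≠ z := by
  have hc : σ.IsCycle := Equiv.Perm.isCycle_of_prime_order'' (by simpa [ZMod.card] using Fact.out)
    (by rw [ZMod.card]; exact h)
  have hs : σ.support = Finset.univ := by
    apply Finset.eq_univ_of_card
    rw [← hc.orderOf, h, ZMod.card]
  rw [← Equiv.Perm.mem_support, hs]
  exact Finset.mem_univ z

theorem pow_bijective {σ : Equiv.Perm (ZMod p)} (h : orderOf σ = p) (z : ZMod p) :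
    Function.Bijective (fun i : Fin p => (σ ^ (i : ℕ)) z) := by
  rw [Fintype.bijective_iff_injective_and_card]
  refine ⟨?_, by simp [ZMod.card]⟩
  have key : ∀ k : ℕ, 0 < k → k < p → ∀ w : ZMod p, (σ ^ k) w ≠ w := by
    intro k hk0 hkp w
    have h1 : σ ^ k ≠ 1 := pow_ne_one_of_lt_orderOf hk0.ne' (by rw [h]; exact hkp)
    have h2 : (σ ^ k) ^ p = 1 := by
      have : σ ^ p = 1 := by have := pow_orderOf_eq_one σ; rwa [h] at this
      rw [← pow_mul, mul_comm, pow_mul, this, one_pow]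
    exact no_fixed (orderOf_eq_prime h2 h1) w
  intro i j hij
  simp only at hij
  rcases le_total (i : ℕ) (j : ℕ) with hle | hle
  · by_contra hne
    have hlt : (i : ℕ) < (j : ℕ) := lt_of_le_of_ne hle (fun hv => hne (Fin.val_injective hv))
    have : (σ ^ ((j : ℕ) - (i : ℕ))) ((σ ^ (i : ℕ)) z) = (σ ^ (i : ℕ)) z := by
      rw [← Equiv.Perm.mul_apply, ← pow_add, Nat.sub_add_cancel hle, hij]
    exact key _ (Nat.sub_pos_of_lt hlt) (lt_of_le_of_lt (Nat.sub_le _ _) j.isLt) _ this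
  · by_contra hne
    have hlt : (j : ℕ) < (i : ℕ) := lt_of_le_of_ne hle (fun hv => hne (Fin.val_injective hv.symm))
    have : (σ ^ ((i : ℕ) - (j : ℕ))) ((σ ^ (j : ℕ)) z) = (σ ^ (j : ℕ)) z := by
      rw [← Equiv.Perm.mul_apply, ← pow_add, Nat.sub_add_cancel hle, hij]
    exact key _ (Nat.sub_pos_of_lt hlt) (lt_of_le_of_lt (Nat.sub_le _ _) i.isLt) _ this

theorem prod_reindex {σ : Equiv.Perm (ZMod p)} (h : orderOf σ = p) (z : ZMod p)
    {M : Type*} [CommMonoid M] (f : ZMod p → M) :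
    ∏ i ∈ Finset.range p, f ((σ ^ i) z) = ∏ y : ZMod p, f y := by
  rw [← Fin.prod_univ_eq_prod_range (fun i => f ((σ ^ i) z)) p]
  exact Equiv.prod_comp (Equiv.ofBijective _ (pow_bijective h z)) f

theorem orderOf_iff (a : Hgrp p) :
    orderOf a = p ↔ (orderOf a.perm = p ∧ ∏ y : ZMod p, a.der y = 1) := by
  have hp : p.Prime := Fact.out
  have hp2 : 2 ≤ p := hp.two_le
  constructor
  · intro h
    have hpow : a ^ p = 1 := by have := pow_orderOf_eq_one a; rwa [h] at this
    have hne : a ≠ 1 := by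
      intro h1; rw [h1, orderOf_one] at h; exact hp.ne_one h.symm
    have hperm : a.perm ^ p = 1 := by rw [← pow_perm, hpow]; rfl
    have hder : ∀ x, ∏ i ∈ Finset.range p, a.der ((a.perm ^ i) x) = 1 := fun x => by
      rw [← pow_der, hpow]; rfl
    by_cases hp1 : a.perm = 1
    · exfalso
      apply hne
      refine Hgrp.ext hp1 (funext fun x => ?_)
      have h1 : a.der x ^ p = 1 := by
        have := hder x
        simpa [hp1, Finset.prod_const] using this
      have h2 : orderOf (a.der x) ∣ p := orderOf_dvd_of_pow_eq_one h1
      have h3 : orderOf (a.der x) ∣ p - 1 := by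
        have := orderOf_dvd_card (x := a.der x)
        rwa [ZMod.card_units_eq_totient,
          Nat.totient_prime hp] at this
      rcases (Nat.Prime.eq_one_or_self_of_dvd hp _ h2) with h4 | h4
      · exact orderOf_eq_one_iff.mp h4
      · exfalso
        rw [h4] at h3
        have := Nat.le_of_dvd (by omega : 0 < p - 1) h3
        omega
    · have hop : orderOf a.perm = p := orderOf_eq_prime hperm hp1
      refine ⟨hop, ?_⟩
      have := hder 0
      rwa [prod_reindex hop 0 (fun y => a.der y)] at this
  · rintro ⟨hop, hprod⟩
    have hne : a ≠ 1 := by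
      intro h1
      rw [h1] at hop
      rw [show (1 : Hgrp p).perm = 1 from rfl, orderOf_one] at hop
      exact hp.ne_one hop.symm
    refine orderOf_eq_prime ?_ hne
    refine Hgrp.ext ?_ ?_
    · rw [pow_perm]
      show a.perm ^ p = 1
      have := pow_orderOf_eq_one a.perm; rwa [hop] at this
    · funext x
      show (a ^ p).der x = 1
      rw [pow_der, prod_reindex hop x]
      exact hprod

theorem card_prod_one :
    Nat.card {d : ZMod p → (ZMod p)ˣ // ∏ y : ZMod p, d y = 1} = (p - 1) ^ (p - 1) := by
  classical
  have hp : p.Prime := Fact.out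
  have hp2 : 2 ≤ p := hp.two_le
  have hpos : 0 < p - 1 := by omega
  have hstep : (p - 1) * (p - 1) ^ (p - 1) = (p - 1) ^ p := by
    rw [← pow_succ', Nat.sub_add_cancel (by omega : 1 ≤ p)]
  set P : (ZMod p → (ZMod p)ˣ) →* (ZMod p)ˣ :=
    MonoidHom.mk' (fun d => ∏ y : ZMod p, d y)
      (fun a b => by simp [Finset.prod_mul_distrib]) with hP
  have hsurj : Function.Surjective P := by
    intro c
    refine ⟨Pi.mulSingle 0 c, ?_⟩
    show ∏ y : ZMod p, Pi.mulSingle (0 : ZMod p) c y = c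
    simp [Finset.prod_pi_mulSingle']
  have hcard : Nat.card (ZMod p → (ZMod p)ˣ)
      = Nat.card (ZMod p)ˣ * Nat.card P.ker := by
    rw [Subgroup.card_eq_card_quotient_mul_card_subgroup P.ker]
    congr 1
    exact Nat.card_congr (QuotientGroup.quotientKerEquivOfSurjective P hsurj).toEquiv
  have hu : Nat.card (ZMod p)ˣ = p - 1 := by
    rw [Nat.card_eq_fintype_card, ZMod.card_units_eq_totient, Nat.totient_prime hp]
  have hfun : Nat.card (ZMod p → (ZMod p)ˣ) = (p - 1) ^ p := by
    rw [Nat.card_eq_fintype_card, Fintype.card_fun, ZMod.card, ZMod.card_units_eq_totient,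
      Nat.totient_prime hp]
  have hker : Nat.card {d : ZMod p → (ZMod p)ˣ // ∏ y : ZMod p, d y = 1}
      = Nat.card P.ker := by
    apply Nat.card_congr
    exact Equiv.subtypeEquivRight fun d => Iff.symm (MonoidHom.mem_ker (f := P))
  rw [hker]
  rw [hfun, hu, ← hstep] at hcard
  exact (Nat.eq_of_mul_eq_mul_left hpos hcard).symm

theorem card_orderp_perm :
    Nat.card {σ : Equiv.Perm (ZMod p) // orderOf σ = p} = (p - 1).factorial := by
  classical
  have hp : p.Prime := Fact.out
  have hp2 : 2 ≤ p := hp.two_le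
  set c : Equiv.Perm (ZMod p) := Equiv.addLeft (1 : ZMod p) with hc
  have hcn : ∀ n : ℕ, c ^ n = Equiv.addLeft (n : ZMod p) := by
    intro n
    induction n with
    | zero => ext x; simp
    | succ n ih =>
      rw [pow_succ', ih]
      ext x
      simp only [Equiv.Perm.mul_apply, hc, Equiv.coe_addLeft, Nat.cast_succ]
      ring
  have hordc : orderOf c = p := by
    apply orderOf_eq_prime
    · rw [hcn p]; simp
    · intro h1
      have h0 : c 0 = 0 := by rw [h1]; rfl
      simp [hc, Equiv.addLeft] at h0
  -- bijectivity of i ↦ σ^(i.val) 0 for σ of order p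
  have hbij : ∀ σ : Equiv.Perm (ZMod p), orderOf σ = p →
      Function.Bijective (fun i : ZMod p => (σ ^ (i.val : ℕ)) 0) := by
    intro σ h
    have h1 : Function.Bijective (fun j : Fin p => (σ ^ (j : ℕ)) 0) := pow_bijective h 0
    have h2 : Function.Bijective (fun i : ZMod p => (⟨i.val, ZMod.val_lt i⟩ : Fin p)) := by
      rw [Fintype.bijective_iff_injective_and_card]
      exact ⟨fun a b hab => ZMod.val_injective p (congrArg Fin.val hab), by simp [ZMod.card]⟩
    exact h1.comp h2
  have key : {g : Equiv.Perm (ZMod p) // g 0 = 0} ≃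
      {σ : Equiv.Perm (ZMod p) // orderOf σ = p} := by
    refine ⟨fun g => ⟨g.1 * c * g.1⁻¹, ?_⟩,
        fun σ => ⟨Equiv.ofBijective _ (hbij σ.1 σ.2), ?_⟩, ?_, ?_⟩
    · exact (orderOf_injective (MulAut.conj g.1).toMonoidHom
        (MulAut.conj g.1).injective c).trans hordc
    · show (σ.1 ^ ((0 : ZMod p).val : ℕ)) 0 = 0
      rw [ZMod.val_zero, pow_zero]
      rfl
    · intro g
      apply Subtype.ext
      apply Equiv.ext
      intro i
      show ((g.1 * c * g.1⁻¹) ^ (i.val : ℕ)) 0 = g.1 i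
      have hg0 : g.1⁻¹ 0 = 0 := by
        rw [Equiv.Perm.inv_eq_iff_eq]
        exact g.2.symm
      rw [conj_pow, hcn i.val]
      show g.1 ((Equiv.addLeft ((i.val : ℕ) : ZMod p)) (g.1⁻¹ 0)) = g.1 i
      rw [hg0]
      show g.1 (((i.val : ℕ) : ZMod p) + 0) = g.1 i
      rw [add_zero, ZMod.natCast_rightInverse i]
    · intro σ
      apply Subtype.ext
      show _ * c * _⁻¹ = σ.1
      rw [mul_inv_eq_iff_eq_mul]
      apply Equiv.ext
      intro i
      show Equiv.ofBijective _ (hbij σ.1 σ.2) (c i) = σ.1 (Equiv.ofBijective _ (hbij σ.1 σ.2) i)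
      show (σ.1 ^ (((1 : ZMod p) + i).val : ℕ)) 0 = σ.1 ((σ.1 ^ (i.val : ℕ)) 0)
      have hmod : ((1 : ZMod p) + i).val ≡ i.val + 1 [MOD orderOf σ.1] := by
        rw [σ.2, ZMod.val_add, ZMod.val_one]
        simpa [Nat.add_comm] using Nat.mod_modEq (1 + i.val) p
      rw [pow_eq_pow_iff_modEq.mpr hmod, pow_succ']
      rfl
  rw [Nat.card_congr key.symm]
  have e2 : {g : Equiv.Perm (ZMod p) // g 0 = 0} ≃ Equiv.Perm {x : ZMod p // x ≠ 0} := by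
    refine (Equiv.subtypeEquivRight ?_).trans
      (Equiv.Perm.subtypeEquivSubtypePerm (fun x : ZMod p => x ≠ 0)).symm
    intro g
    constructor
    · intro h x hx
      rw [not_not] at hx
      rw [hx]
      exact h
    · intro h
      exact h 0 (not_not.mpr rfl)
  rw [Nat.card_congr e2, Nat.card_eq_fintype_card, Fintype.card_perm]
  congr 1
  have : Fintype.card {x : ZMod p // ¬ x = 0} = p - 1 := by
    rw [Fintype.card_subtype_compl, ZMod.card, Fintype.card_subtype_eq]
  exact this

theorem card_orderp_H :
    Nat.card {a : Hgrp p // orderOf a = p} = (p - 1).factorial * (p - 1) ^ (p - 1) := by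
  have e1 : {a : Hgrp p // orderOf a = p} ≃
      {a : Hgrp p // orderOf a.perm = p ∧ ∏ y : ZMod p, a.der y = 1} :=
    Equiv.subtypeEquivRight fun a => orderOf_iff a
  have e2 : {a : Hgrp p // orderOf a.perm = p ∧ ∏ y : ZMod p, a.der y = 1} ≃
      {σ : Equiv.Perm (ZMod p) // orderOf σ = p} ×
        {d : ZMod p → (ZMod p)ˣ // ∏ y : ZMod p, d y = 1} :=
    { toFun := fun a => (⟨a.1.perm, a.2.1⟩, ⟨a.1.der, a.2.2⟩)
      invFun := fun x => ⟨⟨x.1.1, x.2.1⟩, x.1.2, x.2.2⟩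
      left_inv := fun a => rfl
      right_inv := fun x => rfl }
  rw [Nat.card_congr (e1.trans e2), Nat.card_prod, card_orderp_perm, card_prod_one]

theorem factorization_cardH : (Nat.card (Hgrp p)).factorization p = 1 := by
  have hp : p.Prime := Fact.out
  have hp2 : 2 ≤ p := hp.two_le
  have hG : Nat.card (Hgrp p) = p * ((p - 1).factorial * (p - 1) ^ p) := by
    rw [cardH, ← Nat.mul_factorial_pred (show p ≠ 0 by omega), mul_assoc]
  have hndvd : ¬ p ∣ (p - 1).factorial * (p - 1) ^ p := by
    intro h
    rcases (Nat.Prime.dvd_mul hp).mp h with h | h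
    · have := (Nat.Prime.dvd_factorial hp).mp h
      omega
    · have := Nat.le_of_dvd (by omega) (hp.dvd_of_dvd_pow h)
      omega
  have hm : (p - 1).factorial * (p - 1) ^ p ≠ 0 :=
    Nat.mul_ne_zero (Nat.factorial_ne_zero _) (pow_ne_zero _ (by omega))
  rw [hG, Nat.factorization_mul (by omega) hm]
  simp only [Finsupp.coe_add, Pi.add_apply, Nat.factorization_eq_zero_of_not_dvd hndvd,
    Nat.Prime.factorization_self hp, add_zero]

end HgrpAux

/-- The number of Sylow `p`-subgroups of `H` is `(p-1)!·(p-1)^{p-2}`. -/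
theorem card_sylow_H (p : ℕ) [Fact p.Prime] :
    Nat.card (Sylow p (Hgrp p)) = Nat.factorial (p - 1) * (p - 1) ^ (p - 2) := by
  classical
  have hp : p.Prime := Fact.out
  have hp2 : 2 ≤ p := hp.two_le
  letI : Fintype (Sylow p (Hgrp p)) := Fintype.ofFinite _
  have hfact := HgrpAux.factorization_cardH (p := p)
  have hPcard : ∀ P : Sylow p (Hgrp p), Nat.card P = p := fun P => by
    rw [Sylow.card_eq_multiplicity, hfact, pow_one]
  set f : Hgrp p → Sylow p (Hgrp p) := fun x =>
    if h : orderOf x = p then Sylow.ofCard (Subgroup.zpowers x)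
      (by rw [Nat.card_zpowers, h, hfact, pow_one]) else Classical.arbitrary _ with hf
  set S : Finset (Hgrp p) := Finset.univ.filter (fun x => orderOf x = p) with hSdef
  have hsum : S.card = ∑ P : Sylow p (Hgrp p), (S.filter (fun x => f x = P)).card :=
    Finset.card_eq_sum_card_fiberwise (fun x _ => Finset.mem_univ (f x))
  have hfiber : ∀ P : Sylow p (Hgrp p), (S.filter (fun x => f x = P)).card = p - 1 := by
    intro P
    letI : Fintype (P : Subgroup (Hgrp p)) := Fintype.ofFinite _
    have hmem : ∀ x : Hgrp p, (orderOf x = p ∧ f x = P) ↔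
        (x ∈ (P : Subgroup (Hgrp p)) ∧ x ≠ 1) := by
      intro x
      constructor
      · rintro ⟨hx, hfx⟩
        simp only [hf] at hfx
        rw [dif_pos hx] at hfx
        have hcoe : (Subgroup.zpowers x) = (P : Subgroup (Hgrp p)) := by
          rw [← hfx, Sylow.coe_ofCard]
        refine ⟨hcoe ▸ Subgroup.mem_zpowers x, fun h1 => ?_⟩
        rw [h1, orderOf_one] at hx
        omega
      · rintro ⟨hxP, hx1⟩
        have hx : orderOf x = p := by
          have hdvd : orderOf (⟨x, hxP⟩ : (P : Subgroup (Hgrp p))) ∣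
              Fintype.card (P : Subgroup (Hgrp p)) := orderOf_dvd_card
          rw [Subgroup.orderOf_mk] at hdvd
          have hc : Fintype.card (P : Subgroup (Hgrp p)) = p := by
            rw [← Nat.card_eq_fintype_card]; exact hPcard P
          rw [hc] at hdvd
          exact (hp.eq_one_or_self_of_dvd _ hdvd).resolve_left
            (fun h => hx1 (orderOf_eq_one_iff.mp h))
        refine ⟨hx, ?_⟩
        apply Sylow.ext
        simp only [hf]
        rw [dif_pos hx, Sylow.coe_ofCard]
        exact Subgroup.eq_of_le_of_card_ge (Subgroup.zpowers_le.mpr hxP)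
          (by rw [hPcard P, Nat.card_zpowers, hx])
    have heq : S.filter (fun x => f x = P) =
        Finset.univ.filter (fun x : Hgrp p => x ∈ (P : Subgroup (Hgrp p)) ∧ x ≠ 1) := by
      ext x
      simp only [hSdef, Finset.mem_filter, Finset.mem_univ, true_and, and_assoc]
      rw [← hmem x]
    rw [heq, ← Fintype.card_subtype]
    have e : {x : Hgrp p // x ∈ (P : Subgroup (Hgrp p)) ∧ x ≠ 1} ≃
        {y : (P : Subgroup (Hgrp p)) // ¬ y = 1} :=
      { toFun := fun x => ⟨⟨x.1, x.2.1⟩, fun h => x.2.2 (congrArg Subtype.val h)⟩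
        invFun := fun y => ⟨y.1.1, y.1.2, fun h => y.2 (Subtype.ext h)⟩
        left_inv := fun x => rfl
        right_inv := fun y => rfl }
    rw [Fintype.card_congr e, Fintype.card_subtype_compl, Fintype.card_subtype_eq]
    have : Fintype.card (P : Subgroup (Hgrp p)) = p := by
      rw [← Nat.card_eq_fintype_card]
      exact hPcard P
    rw [this]
  -- assemble
  have hScard : S.card = (p - 1).factorial * (p - 1) ^ (p - 1) := by
    rw [← HgrpAux.card_orderp_H (p := p), Nat.card_eq_fintype_card, Fintype.card_subtype]
  rw [hScard] at hsum
  simp only [hfiber, Finset.sum_const, smul_eq_mul, Finset.card_univ] at hsum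
  have hfinal : Nat.card (Sylow p (Hgrp p)) * (p - 1)
      = ((p - 1).factorial * (p - 1) ^ (p - 2)) * (p - 1) := by
    rw [Nat.card_eq_fintype_card, ← hsum, mul_assoc, ← pow_succ,
      show p - 2 + 1 = p - 1 by omega]
  exact Nat.eq_of_mul_eq_mul_right (by omega : 0 < p - 1) hfinal
end

section
/- Let p be a prime and n ≥ 2. For every cyclic subgroup C of order p of Sym(ℤ/pℤ) and every function φ : ℤ/pℤ → ℤ/pℤ∖{0}, the set S_{(C,φ)} = {[f]_{p^n} ∈ G_n : [f]_p ∈ C and [f′]_p(x) = φ([f]_p(x))/φ(x) for all x ∈ ℤ/pℤ} is a Sylow p-subgroup of G_n; every Sylow p-subgroup of G_n is of this form; and S_{(C,φ)} = S_{(D,ψ)} if and only if C = D and φ = k·ψ for some nonzero constant k ∈ ℤ/pℤ. Consequently the Sylow p-subgroups of G_n are in bijective correspondence with pairs (C, φ̄), where φ̄ is the class of φ under multiplication by nonzero constants. -/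
/-- The group `G_n` of polynomial permutations of `ℤ/p^nℤ`, as a subgroup of
the permutation group of `ZMod (p ^ n)`: those permutations induced by a
polynomial with integer coefficients. -/
def polyPermGroup (p n : ℕ) [NeZero (p ^ n)] : Subgroup (Equiv.Perm (ZMod (p ^ n))) where
  carrier := {σ | ∃ f : Polynomial ℤ, ∀ x, σ x = Polynomial.aeval x f}
  one_mem' := ⟨Polynomial.X, fun x => by simp⟩
  mul_mem' := by
    rintro σ τ ⟨f, hf⟩ ⟨g, hg⟩
    exact ⟨f.comp g, fun x => by
      simp [Equiv.Perm.mul_apply, hf, hg, Polynomial.aeval_comp]⟩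
  inv_mem' := by
    rintro σ ⟨f, hf⟩
    have hpow : ∀ m : ℕ, ∃ g : Polynomial ℤ, ∀ x, (σ ^ m) x = Polynomial.aeval x g := by
      intro m
      induction m with
      | zero => exact ⟨Polynomial.X, fun x => by simp⟩
      | succ m ih =>
        obtain ⟨g, hg⟩ := ih
        refine ⟨g.comp f, fun x => ?_⟩
        rw [pow_succ, Equiv.Perm.mul_apply, hg, hf, Polynomial.aeval_comp]
    obtain ⟨g, hg⟩ := hpow (orderOf σ - 1)
    have h1 : σ⁻¹ = σ ^ (orderOf σ - 1) := by
      have hpos : 0 < orderOf σ := orderOf_pos σ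
      have hmul : σ * σ ^ (orderOf σ - 1) = 1 := by
        rw [← pow_succ', Nat.sub_add_cancel hpos, pow_orderOf_eq_one]
      exact (eq_inv_of_mul_eq_one_right hmul).symm
    exact ⟨g, fun x => by rw [h1]; exact hg x⟩

/-- The subset `S_{(C,φ)} = {[f]_{p^n} ∈ G_n : [f]_p ∈ C,
[f']_p(x) = φ([f]_p(x))/φ(x)}` of `G_n`. -/
def sylowCandidateGn (p n : ℕ) [NeZero (p ^ n)] (C : Subgroup (Equiv.Perm (ZMod p)))
    (φ : ZMod p → (ZMod p)ˣ) : Set (polyPermGroup p n) :=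
  {σ : polyPermGroup p n | ∃ f : Polynomial ℤ,
    (∀ x : ZMod (p ^ n), (σ : Equiv.Perm (ZMod (p ^ n))) x = Polynomial.aeval x f) ∧
    ∃ c ∈ C, (∀ x : ZMod p, Polynomial.aeval x f = c x) ∧
      ∀ x : ZMod p, Polynomial.aeval x (Polynomial.derivative f) =
        ((φ (c x) / φ x : (ZMod p)ˣ) : ZMod p)}



namespace SGn

open Polynomial

/-- Evaluation of an integer polynomial at a cast integer. -/
lemma aeval_intCast (N : ℕ) (g : ℤ[X]) (m : ℤ) :
    aeval ((m : ZMod N)) g = ((g.eval m : ℤ) : ZMod N) := by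
  have := Polynomial.aeval_algHom_apply (Int.castRingHom (ZMod N)).toIntAlgHom m g
  simpa using this

/-- A function condition on `ZMod N` transferred to divisibility over `ℤ`. -/
lemma dvd_of_aeval_eq {N : ℕ} {f g : ℤ[X]}
    (h : ∀ x : ZMod N, aeval x f = aeval x g) (m : ℤ) :
    (N : ℤ) ∣ f.eval m - g.eval m := by
  have := h ((m : ZMod N))
  rw [aeval_intCast, aeval_intCast] at this
  have : (((f.eval m - g.eval m : ℤ)) : ZMod N) = 0 := by push_cast; rw [this]; ring
  exact (ZMod.intCast_zmod_eq_zero_iff_dvd _ _).mp this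

lemma aeval_eq_of_dvd {N : ℕ} {f g : ℤ[X]}
    (h : ∀ m : ℤ, (N : ℤ) ∣ f.eval m - g.eval m) (x : ZMod N) :
    aeval x f = aeval x g := by
  obtain ⟨m, rfl⟩ := ZMod.intCast_surjective x
  rw [aeval_intCast, aeval_intCast]
  have : (((f.eval m - g.eval m : ℤ)) : ZMod N) = 0 :=
    (ZMod.intCast_zmod_eq_zero_iff_dvd _ _).mpr (h m)
  push_cast at this
  linear_combination this

variable {p n : ℕ} [Fact p.Prime]

lemma p_prime : p.Prime := Fact.out

/-- Key well-definedness: if two integer polynomials induce the same function on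
`ZMod (p^n)`, `n ≥ 2`, then they induce the same function mod `p` and their
derivatives induce the same function mod `p`. -/
lemma congr_mod_p (hn : 2 ≤ n) {f g : ℤ[X]}
    (h : ∀ x : ZMod (p ^ n), aeval x f = aeval x g) :
    (∀ x : ZMod p, aeval x f = aeval x g) ∧
    (∀ x : ZMod p, aeval x (derivative f) = aeval x (derivative g)) := by
  have hdvd : ∀ m : ℤ, (p : ℤ) ^ 2 ∣ f.eval m - g.eval m := by
    intro m
    have := dvd_of_aeval_eq h m
    push_cast at this
    exact dvd_trans (pow_dvd_pow (p : ℤ) hn) this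
  constructor
  · refine aeval_eq_of_dvd (fun m => ?_)
    exact dvd_trans (dvd_pow_self (p:ℤ) two_ne_zero) (hdvd m)
  · refine aeval_eq_of_dvd (fun m => ?_)
    set h0 : ℤ[X] := f - g with hh0
    have hder : derivative f - derivative g = derivative h0 := by
      rw [hh0, derivative_sub]
    have hval : ∀ m : ℤ, (p:ℤ)^2 ∣ h0.eval m := by
      intro m; simpa [hh0] using hdvd m
    obtain ⟨k, hk⟩ := Polynomial.binomExpansion h0 m (p : ℤ)
    -- h0.eval (m + p) = h0.eval m + h0'.eval m * p + k * p^2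
    have h1 : (p:ℤ)^2 ∣ (derivative h0).eval m * p := by
      have h2 := hval (m + p)
      rw [hk] at h2
      have h4 : (p:ℤ)^2 ∣ k * (p:ℤ)^2 := Dvd.intro_left k rfl
      have := (dvd_sub (dvd_sub h2 (hval m)) h4)
      have he : eval m h0 + eval m (derivative h0) * ↑p + k * ↑p ^ 2 - eval m h0 - k * ↑p^2
          = eval m (derivative h0) * ↑p := by ring
      rwa [he] at this
    have h3 : (p:ℤ) ∣ (derivative h0).eval m := by
      have hp : (p:ℤ) ≠ 0 := by exact_mod_cast (p_prime (p := p)).ne_zero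
      rcases h1 with ⟨c, hc⟩
      refine ⟨c, ?_⟩
      have : (derivative h0).eval m * p = (p * c) * p := by
        rw [hc]; ring
      exact mul_right_cancel₀ hp this
    have heq : (derivative f).eval m - (derivative g).eval m = (derivative h0).eval m := by
      rw [← hder]; simp
    rw [heq]; exact h3





/-- If `[f]_{p^n}` is injective, `n ≥ 2`, then `p ∤ f'(m)` for all integers `m`. -/
lemma deriv_unit (hn : 2 ≤ n) {f : ℤ[X]}
    (hinj : Function.Injective (fun x : ZMod (p ^ n) => aeval x f)) (m : ℤ) :
    ¬ (p : ℤ) ∣ (derivative f).eval m := by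
  intro hdvd
  obtain ⟨k, hk⟩ := Polynomial.binomExpansion f m ((p : ℤ) ^ (n - 1))
  have h1 : (p:ℤ)^n ∣ f.eval (m + (p:ℤ)^(n-1)) - f.eval m := by
    rw [hk]
    have ha : (p:ℤ)^n ∣ (derivative f).eval m * (p:ℤ)^(n-1) := by
      obtain ⟨c, hc⟩ := hdvd
      have hne : (p:ℤ)^n = (p:ℤ) * (p:ℤ)^(n-1) := by
        conv_lhs => rw [show n = 1 + (n - 1) by omega]
        rw [pow_add, pow_one]
      rw [hc, hne]
      exact ⟨c, by ring⟩
    have hb : (p:ℤ)^n ∣ k * ((p:ℤ)^(n-1))^2 := by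
      refine Dvd.dvd.mul_left ?_ k
      rw [← pow_mul]
      exact pow_dvd_pow _ (by omega)
    have := dvd_add ha hb
    convert this using 1 <;> first | rfl | ring
  have h2 : ((m + (p:ℤ)^(n-1) : ℤ) : ZMod (p^n)) = ((m : ℤ) : ZMod (p^n)) := by
    have hx : aeval ((m + (p:ℤ)^(n-1) : ℤ) : ZMod (p^n)) f = aeval ((m:ℤ) : ZMod (p^n)) f := by
      rw [aeval_intCast, aeval_intCast]
      have : (((f.eval (m + (p:ℤ)^(n-1)) - f.eval m : ℤ)) : ZMod (p^n)) = 0 := by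
        rw [ZMod.intCast_zmod_eq_zero_iff_dvd]
        push_cast
        exact h1
      push_cast at this ⊢
      linear_combination this
    exact hinj hx
  have h3 : (((p:ℤ)^(n-1) : ℤ) : ZMod (p^n)) = 0 := by
    have : (((m + (p:ℤ)^(n-1)) - m : ℤ) : ZMod (p^n)) = 0 := by
      push_cast at h2 ⊢
      linear_combination h2
    simpa using this
  rw [ZMod.intCast_zmod_eq_zero_iff_dvd] at h3
  have h4 : ((p:ℤ)^n) ∣ (p:ℤ)^(n-1) := by push_cast at h3; exact h3
  have hplt : (1:ℤ) < (p:ℤ) := by exact_mod_cast (p_prime (p := p)).one_lt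
  have := Int.le_of_dvd (by positivity) h4
  have := pow_lt_pow_right₀ hplt (show n - 1 < n by omega)
  omega

/-- Hensel-style injectivity: if `[f]_p` is injective and `p ∤ f'` everywhere, then
`[f]_{p^n}` is injective. -/
lemma injective_lift {f : ℤ[X]}
    (hinj1 : Function.Injective (fun x : ZMod p => aeval x f))
    (hder : ∀ m : ℤ, ¬ (p:ℤ) ∣ (derivative f).eval m) :
    Function.Injective (fun x : ZMod (p ^ n) => aeval x f) := by
  have hp1 : ∀ a b : ℤ, (p:ℤ) ∣ f.eval a - f.eval b → (p:ℤ) ∣ a - b := by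
    intro a b hab
    have : aeval ((a:ℤ) : ZMod p) f = aeval ((b:ℤ) : ZMod p) f := by
      rw [aeval_intCast, aeval_intCast]
      have : (((f.eval a - f.eval b : ℤ)) : ZMod p) = 0 := by
        rw [ZMod.intCast_zmod_eq_zero_iff_dvd]; exact_mod_cast hab
      push_cast at this; linear_combination this
    have := hinj1 this
    have : (((a - b : ℤ)) : ZMod p) = 0 := by push_cast; linear_combination this
    rw [ZMod.intCast_zmod_eq_zero_iff_dvd] at this; exact_mod_cast this
  have key : ∀ k : ℕ, 1 ≤ k → ∀ a b : ℤ, (p:ℤ)^k ∣ f.eval a - f.eval b → (p:ℤ)^k ∣ a - b := by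
    intro k
    induction k with
    | zero => intro h; omega
    | succ k ih =>
      intro _ a b hab
      by_cases hk1 : 1 ≤ k
      · have hk : (p:ℤ)^k ∣ a - b :=
          ih hk1 a b (dvd_trans (pow_dvd_pow _ (Nat.le_succ k)) hab)
        obtain ⟨t, ht⟩ := hk
        obtain ⟨c, hc⟩ := Polynomial.binomExpansion f b (a - b)
        rw [show b + (a - b) = a by ring] at hc
        have h2 : (p:ℤ)^(k+1) ∣ (derivative f).eval b * ((p:ℤ)^k * t) := by
          have hsq : (p:ℤ)^(k+1) ∣ c * (a-b)^2 := by
            have h2 : (p:ℤ)^(k+1) ∣ (a-b)^2 := by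
              rw [ht, mul_pow, ← pow_mul]
              exact Dvd.dvd.mul_right (pow_dvd_pow _ (by omega)) _
            exact Dvd.dvd.mul_left h2 c
          have hstep := dvd_sub hab hsq
          rw [← ht]
          have heq : f.eval a - f.eval b - c * (a-b)^2 = (derivative f).eval b * (a - b) := by
            rw [hc]; ring
          rwa [heq] at hstep
        have h3 : (p:ℤ) ∣ (derivative f).eval b * t := by
          obtain ⟨d, hd⟩ := h2
          have hpk : ((p:ℤ)^k) ≠ 0 := by
            have : (p:ℤ) ≠ 0 := by exact_mod_cast (p_prime (p := p)).ne_zero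
            positivity
          refine ⟨d, mul_left_cancel₀ hpk ?_⟩
          have : (p:ℤ)^(k+1) = (p:ℤ)^k * (p:ℤ) := by ring
          rw [this] at hd
          have h5 : (p:ℤ)^k * ((derivative f).eval b * t) = (p:ℤ)^k * ((p:ℤ) * d) := by
            calc (p:ℤ)^k * ((derivative f).eval b * t)
                = (derivative f).eval b * ((p:ℤ)^k * t) := by ring
              _ = (p:ℤ)^k * (p:ℤ) * d := hd
              _ = (p:ℤ)^k * ((p:ℤ) * d) := by ring
          exact h5
        have hpprime : Prime (p:ℤ) := Int.prime_iff_natAbs_prime.mpr (by simpa using (p_prime (p := p)))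
        rcases hpprime.dvd_mul.mp h3 with h | h
        · exact absurd h (hder b)
        · obtain ⟨s, hs⟩ := h
          refine ⟨s, ?_⟩
          rw [ht, hs]; ring
      · have hk0 : k = 0 := by omega
        subst hk0
        have := hp1 a b (by simpa using hab)
        simpa using this
  intro x y hxy
  obtain ⟨a, rfl⟩ := ZMod.intCast_surjective x
  obtain ⟨b, rfl⟩ := ZMod.intCast_surjective y
  simp only at hxy
  rw [aeval_intCast, aeval_intCast] at hxy
  have hd : (((p^n : ℕ) : ℤ)) ∣ f.eval a - f.eval b := by
    rw [← ZMod.intCast_zmod_eq_zero_iff_dvd]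
    push_cast at hxy ⊢
    linear_combination hxy
  by_cases hn0 : n = 0
  · subst hn0
    haveI : Subsingleton (ZMod (p^0)) := by
      rw [pow_zero]; infer_instance
    exact Subsingleton.elim _ _
  have : (p:ℤ)^n ∣ a - b := key n (by omega) a b (by push_cast at hd; exact hd)
  have : (((a - b : ℤ)) : ZMod (p^n)) = 0 := by
    rw [ZMod.intCast_zmod_eq_zero_iff_dvd]; push_cast; exact this
  push_cast at this
  linear_combination this




lemma aeval_eq_eval_map (f : ℤ[X]) (x : ZMod p) :
    aeval x f = (f.map (Int.castRingHom (ZMod p))).eval x := by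
  rw [aeval_def, ← eval_map, algebraMap_int_eq]

/-- Hermite-type interpolation mod p: realize any target function and target
derivative function by an integer polynomial. -/
lemma interpolation (u v : ZMod p → ZMod p) :
    ∃ f : ℤ[X], (∀ x : ZMod p, aeval x f = u x) ∧
      (∀ x : ZMod p, aeval x (derivative f) = v x) := by
  classical
  set G : (ZMod p)[X] := Lagrange.interpolate Finset.univ id u with hG
  have hGval : ∀ x : ZMod p, G.eval x = u x := by
    intro x
    have := Lagrange.eval_interpolate_at_node (v := id) (s := Finset.univ) (i := x)
      u (Set.injOn_id _) (Finset.mem_univ x)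
    simpa [hG] using this
  set H : (ZMod p)[X] := Lagrange.interpolate Finset.univ id
      (fun x => (derivative G).eval x - v x) with hH
  have hHval : ∀ x : ZMod p, H.eval x = (derivative G).eval x - v x := by
    intro x
    have := Lagrange.eval_interpolate_at_node (v := id) (s := Finset.univ) (i := x)
      (fun x => (derivative G).eval x - v x) (Set.injOn_id _) (Finset.mem_univ x)
    simpa [hH] using this
  set F : (ZMod p)[X] := G + (X ^ p - X) * H with hF
  obtain ⟨f, hf⟩ := Polynomial.map_surjective (Int.castRingHom (ZMod p))
    ZMod.intCast_surjective F
  refine ⟨f, fun x => ?_, fun x => ?_⟩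
  · rw [aeval_eq_eval_map, hf, hF]
    simp [hGval x, ZMod.pow_card]
  · rw [aeval_eq_eval_map, ← derivative_map, hf, hF]
    have hp0 : ((p : ℕ) : ZMod p) = 0 := ZMod.natCast_self p
    simp only [derivative_add, derivative_mul, derivative_sub, derivative_X_pow, derivative_X]
    simp only [eval_add, eval_mul, eval_sub, eval_pow, eval_X, eval_mul, eval_natCast]
    rw [hHval x]
    have hxc : x ^ p = x := ZMod.pow_card x
    rw [hxc, hp0]
    simp

/-! ### The wreath-like group `W` and the homomorphism `θ` -/

variable (p) in
/-- Action of permutations on unit-valued functions by precomposition with inverse. -/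
def permAct : Equiv.Perm (ZMod p) →* MulAut (ZMod p → (ZMod p)ˣ) where
  toFun c :=
    { toFun := fun d => d ∘ c.symm
      invFun := fun d => d ∘ c
      left_inv := fun d => by ext x; simp
      right_inv := fun d => by ext x; simp
      map_mul' := fun d e => rfl }
  map_one' := by
    apply MulEquiv.ext; intro d; rfl
  map_mul' c₁ c₂ := by
    apply MulEquiv.ext; intro d; funext x; rfl

variable (p) in
/-- The group `F_p^* ≀ Sym(F_p)` (inverse wreath product). -/
abbrev Wgp := SemidirectProduct (ZMod p → (ZMod p)ˣ) (Equiv.Perm (ZMod p)) (permAct p)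

lemma Wgp_mul_left (w w' : Wgp p) (x : ZMod p) :
    (w * w').left x = w.left x * w'.left (w.right.symm x) := rfl

variable [NeZero (p ^ n)]

omit [Fact p.Prime] in
lemma mem_polyPermGroup {σ : Equiv.Perm (ZMod (p ^ n))} :
    σ ∈ polyPermGroup p n ↔ ∃ f : Polynomial ℤ, ∀ x, σ x = aeval x f := Iff.rfl

/-- A chosen integer polynomial representing a polynomial permutation. -/
noncomputable def pf (σ : polyPermGroup p n) : ℤ[X] :=
  (mem_polyPermGroup.mp σ.2).choose

omit [Fact p.Prime] in
lemma pf_spec (σ : polyPermGroup p n) :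
    ∀ x, (σ : Equiv.Perm (ZMod (p ^ n))) x = aeval x (pf σ) :=
  (mem_polyPermGroup.mp σ.2).choose_spec

/-- The induced function modulo `p`. -/
noncomputable def red1 (σ : polyPermGroup p n) : ZMod p → ZMod p :=
  fun x => aeval x (pf σ)

/-- Well-definedness of the mod-`p` reduction. -/
lemma red1_eq (hn : 2 ≤ n) (σ : polyPermGroup p n) {f : ℤ[X]}
    (hf : ∀ x, (σ : Equiv.Perm (ZMod (p ^ n))) x = aeval x f) (x : ZMod p) :
    red1 σ x = aeval x f := by
  have h : ∀ x : ZMod (p ^ n), aeval x (pf σ) = aeval x f := by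
    intro x; rw [← pf_spec σ x, hf x]
  exact (congr_mod_p hn h).1 x

/-- Well-definedness of the mod-`p` derivative. -/
lemma der1_eq (hn : 2 ≤ n) (σ : polyPermGroup p n) {f : ℤ[X]}
    (hf : ∀ x, (σ : Equiv.Perm (ZMod (p ^ n))) x = aeval x f) (x : ZMod p) :
    aeval x (derivative (pf σ)) = aeval x (derivative f) := by
  have h : ∀ x : ZMod (p ^ n), aeval x (pf σ) = aeval x f := by
    intro x; rw [← pf_spec σ x, hf x]
  exact (congr_mod_p hn h).2 x

lemma red1_bijective (hn : 2 ≤ n) (σ : polyPermGroup p n) :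
    Function.Bijective (red1 σ) := by
  have hn0 : n ≠ 0 := by omega
  rw [← Finite.injective_iff_bijective]
  rw [Finite.injective_iff_surjective]
  intro y
  obtain ⟨m, rfl⟩ := ZMod.intCast_surjective y
  have hσ : Function.Surjective (σ : Equiv.Perm (ZMod (p ^ n))) :=
    (σ : Equiv.Perm (ZMod (p ^ n))).surjective
  obtain ⟨z, hz⟩ := hσ ((m : ZMod (p ^ n)))
  let π : ZMod (p ^ n) →+* ZMod p := ZMod.castHom (dvd_pow_self p hn0) (ZMod p)
  refine ⟨π z, ?_⟩
  have hcomm : aeval (π z) (pf σ) = π (aeval z (pf σ)) :=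
    Polynomial.aeval_algHom_apply π.toIntAlgHom z (pf σ)
  have : aeval z (pf σ) = ((m : ZMod (p ^ n))) := by rw [← pf_spec σ z, hz]
  rw [red1]
  rw [hcomm, this]
  simp [π]

/-- The reduction of a polynomial permutation to a permutation of `ZMod p`. -/
noncomputable def redP (hn : 2 ≤ n) (σ : polyPermGroup p n) : Equiv.Perm (ZMod p) :=
  Equiv.ofBijective (red1 σ) (red1_bijective hn σ)

@[simp] lemma redP_apply (hn : 2 ≤ n) (σ : polyPermGroup p n) (x : ZMod p) :
    redP hn σ x = red1 σ x := rfl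

lemma der1_ne_zero (hn : 2 ≤ n) (σ : polyPermGroup p n) (x : ZMod p) :
    aeval x (derivative (pf σ)) ≠ 0 := by
  obtain ⟨m, rfl⟩ := ZMod.intCast_surjective x
  rw [aeval_intCast]
  intro h
  rw [ZMod.intCast_zmod_eq_zero_iff_dvd] at h
  have hinj : Function.Injective (fun x : ZMod (p ^ n) => aeval x (pf σ)) := by
    have : (fun x : ZMod (p ^ n) => aeval x (pf σ)) = (σ : Equiv.Perm (ZMod (p ^ n))) := by
      funext x; rw [← pf_spec σ x]
    rw [this]
    exact (σ : Equiv.Perm (ZMod (p ^ n))).injective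
  exact deriv_unit hn hinj m (by exact_mod_cast h)

/-- The mod-`p` derivative, as a unit. -/
noncomputable def derU (hn : 2 ≤ n) (σ : polyPermGroup p n) (x : ZMod p) : (ZMod p)ˣ :=
  Units.mk0 _ (der1_ne_zero hn σ x)

@[simp] lemma derU_val (hn : 2 ≤ n) (σ : polyPermGroup p n) (x : ZMod p) :
    (derU hn σ x : ZMod p) = aeval x (derivative (pf σ)) := rfl

/-- The key homomorphism `θ : G_n → W`. -/
noncomputable def theta (hn : 2 ≤ n) : polyPermGroup p n →* Wgp p where
  toFun σ := ⟨fun x => derU hn σ ((redP hn σ).symm x), redP hn σ⟩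
  map_one' := by
    have hid : ∀ x, ((1 : polyPermGroup p n) : Equiv.Perm (ZMod (p ^ n))) x = aeval x (X : ℤ[X]) := by
      intro x; simp
    have hred : redP hn (1 : polyPermGroup p n) = 1 := by
      apply Equiv.ext; intro x
      rw [redP_apply, red1_eq hn 1 hid]; simp
    have hder : ∀ x, derU hn (1 : polyPermGroup p n) x = 1 := by
      intro x
      apply Units.ext
      rw [derU_val]
      have := der1_eq hn (1 : polyPermGroup p n) hid x
      rw [this]; simp
    apply SemidirectProduct.ext
    · funext x; simp [hder, hred]
    · exact hred
  map_mul' σ τ := by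
    have hcomp : ∀ x, ((σ * τ : polyPermGroup p n) : Equiv.Perm (ZMod (p ^ n))) x
        = aeval x ((pf σ).comp (pf τ)) := by
      intro x
      rw [Polynomial.aeval_comp, ← pf_spec τ x]
      rw [← pf_spec σ _]
      rfl
    have hredmul : ∀ x : ZMod p, red1 (σ * τ) x = red1 σ (red1 τ x) := by
      intro x
      rw [red1_eq hn _ hcomp, Polynomial.aeval_comp]
      rfl
    have hred : redP hn (σ * τ) = redP hn σ * redP hn τ := by
      apply Equiv.ext; intro x
      rw [redP_apply, hredmul x]
      rfl
    have hdermul : ∀ x : ZMod p, derU hn (σ * τ) x = derU hn σ (red1 τ x) * derU hn τ x := by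
      intro x
      apply Units.ext
      rw [Units.val_mul, derU_val, derU_val, derU_val]
      have h1 := der1_eq hn (σ * τ) hcomp x
      rw [h1, Polynomial.derivative_comp]
      rw [map_mul, Polynomial.aeval_comp, mul_comm]
      rfl
    apply SemidirectProduct.ext
    · funext x
      show derU hn (σ * τ) ((redP hn (σ * τ)).symm x) = _
      have hz : (redP hn (σ * τ)).symm x = (redP hn τ).symm ((redP hn σ).symm x) := by
        rw [hred]; rfl
      rw [hz, hdermul]
      have hy : red1 τ ((redP hn τ).symm ((redP hn σ).symm x)) = (redP hn σ).symm x := by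
        exact (redP hn τ).apply_symm_apply ((redP hn σ).symm x)
      rw [hy]
      rfl
    · exact hred

/-! ### Surjectivity of θ -/

lemma theta_surjective (hn : 2 ≤ n) :
    Function.Surjective (theta (p := p) (n := n) hn) := by
  rintro ⟨a, c⟩
  obtain ⟨f, hfval, hfder⟩ := interpolation (p := p) (fun x => c x)
    (fun x => ((a (c x) : (ZMod p)ˣ) : ZMod p))
  have hinj1 : Function.Injective (fun x : ZMod p => aeval x f) := by
    have he : (fun x : ZMod p => aeval x f) = fun x => c x := funext hfval
    rw [he]; exact fun x y h => c.injective h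
  have hder : ∀ m : ℤ, ¬ (p : ℤ) ∣ (derivative f).eval m := by
    intro m hdvd
    have h0 : (((derivative f).eval m : ℤ) : ZMod p) = 0 := by
      rw [ZMod.intCast_zmod_eq_zero_iff_dvd]; exact_mod_cast hdvd
    have h1 : aeval ((m : ZMod p)) (derivative f) = 0 := by
      rw [aeval_intCast]; exact h0
    rw [hfder] at h1
    exact Units.ne_zero _ h1
  have hbij : Function.Bijective (fun x : ZMod (p ^ n) => aeval x f) :=
    (Finite.injective_iff_bijective).mp (injective_lift hinj1 hder)
  let σ₀ : Equiv.Perm (ZMod (p ^ n)) := Equiv.ofBijective _ hbij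
  have hmem : σ₀ ∈ polyPermGroup p n := ⟨f, fun x => rfl⟩
  refine ⟨⟨σ₀, hmem⟩, ?_⟩
  have hrep : ∀ x, ((⟨σ₀, hmem⟩ : polyPermGroup p n) : Equiv.Perm (ZMod (p ^ n))) x
      = aeval x f := fun x => rfl
  have hredp : redP hn ⟨σ₀, hmem⟩ = c := by
    apply Equiv.ext; intro x
    rw [redP_apply, red1_eq hn _ hrep, hfval]
  apply SemidirectProduct.ext
  · funext x
    show derU hn ⟨σ₀, hmem⟩ ((redP hn ⟨σ₀, hmem⟩).symm x) = a x
    apply Units.ext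
    rw [derU_val, der1_eq hn _ hrep, hredp, hfder]
    congr 2
    exact c.apply_symm_apply x
  · exact hredp

/-! ### The kernel of θ is a p-group -/

/-- `j`-fold composition of a polynomial with itself. -/
noncomputable def iterComp (g : ℤ[X]) (m : ℕ) : ℤ[X] :=
  (fun h => h.comp g)^[m] X

omit [Fact p.Prime] [NeZero (p ^ n)] in
lemma iterComp_zero (g : ℤ[X]) : iterComp g 0 = X := rfl

omit [Fact p.Prime] [NeZero (p ^ n)] in
lemma iterComp_succ (g : ℤ[X]) (m : ℕ) :
    iterComp g (m + 1) = (iterComp g m).comp g :=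
  Function.iterate_succ_apply' _ _ _

omit [Fact p.Prime] [NeZero (p ^ n)] in
lemma iterComp_succ' (g : ℤ[X]) (m : ℕ) :
    iterComp g (m + 1) = g.comp (iterComp g m) := by
  induction m with
  | zero => rw [iterComp_succ, iterComp_zero, Polynomial.comp_X, Polynomial.X_comp]
  | succ m ih =>
    rw [iterComp_succ g (m+1), ih, Polynomial.comp_assoc, ← iterComp_succ, ih]

omit [Fact p.Prime] in
lemma iterComp_aeval {N : ℕ} (τ : Equiv.Perm (ZMod N)) (g : ℤ[X])
    (hg : ∀ x, τ x = aeval x g) (m : ℕ) :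
    ∀ x, (τ ^ m) x = aeval x (iterComp g m) := by
  induction m with
  | zero => intro x; simp [iterComp_zero]
  | succ m ih =>
    intro x
    have : (τ ^ (m + 1)) x = (τ ^ m) (τ x) := by
      rw [pow_succ]; rfl
    rw [this, ih (τ x), hg x, iterComp_succ]
    rw [Polynomial.aeval_comp]

lemma iter_val_congr {g : ℤ[X]} {k : ℕ}
    (h1 : ∀ m : ℤ, (p : ℤ) ^ k ∣ g.eval m - m) :
    ∀ (j : ℕ) (m : ℤ), (p : ℤ) ^ k ∣ (iterComp g j).eval m - m := by
  intro j
  induction j with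
  | zero => intro m; simp [iterComp_zero]
  | succ j ih =>
    intro m
    rw [iterComp_succ, Polynomial.eval_comp]
    have := ih (g.eval m)
    have h2 := h1 m
    have := dvd_add this h2
    convert this using 1 <;> first | rfl | ring

lemma iter_der_congr {g : ℤ[X]}
    (h2 : ∀ m : ℤ, (p : ℤ) ∣ (derivative g).eval m - 1) :
    ∀ (j : ℕ) (m : ℤ), (p : ℤ) ∣ (derivative (iterComp g j)).eval m - 1 := by
  intro j
  induction j with
  | zero => intro m; simp [iterComp_zero]
  | succ j ih =>
    intro m
    rw [iterComp_succ, Polynomial.derivative_comp, Polynomial.eval_mul, Polynomial.eval_comp]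
    have ha := h2 m
    have hb := ih (g.eval m)
    have := dvd_add (Dvd.dvd.mul_right ha ((derivative (iterComp g j)).eval (g.eval m)))
      hb
    convert this using 1 <;> first | rfl | ring

/-- Main step: `p`-fold self-composition raises the level of agreement with the identity. -/
lemma pcomp_step {g : ℤ[X]} {k : ℕ} (hk : 1 ≤ k)
    (h1 : ∀ m : ℤ, (p : ℤ) ^ k ∣ g.eval m - m)
    (h2 : ∀ m : ℤ, (p : ℤ) ∣ (derivative g).eval m - 1) :
    ∀ m : ℤ, (p : ℤ) ^ (k + 1) ∣ (iterComp g p).eval m - m := by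
  intro m
  set e : ℤ := g.eval m - m with he
  have key : ∀ j : ℕ, (p : ℤ) ^ (k + 1) ∣ (iterComp g j).eval m - m - j * e := by
    intro j
    induction j with
    | zero => simp [iterComp_zero]
    | succ j ih =>
      rw [iterComp_succ', Polynomial.eval_comp]
      set aj : ℤ := (iterComp g j).eval m with haj
      -- g.eval aj - m - (j+1) e = (aj - m - j e) + ((g.eval aj - aj) - e)
      have hdiff : (p : ℤ) ^ (k + 1) ∣ (g.eval aj - aj) - e := by
        -- E := g - X ; E(aj) - E(m)
        obtain ⟨c, hc⟩ := Polynomial.binomExpansion (g - X) m (aj - m)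
        rw [show m + (aj - m) = aj by ring] at hc
        have hE : ∀ t : ℤ, (g - X).eval t = g.eval t - t := by
          intro t; simp
        have hE' : (derivative (g - X : ℤ[X])).eval m = (derivative g).eval m - 1 := by
          simp
        rw [hE, hE, hE'] at hc
        have hterm1 : (p : ℤ) ^ (k + 1) ∣ ((derivative g).eval m - 1) * (aj - m) := by
          have d1 := h2 m
          have d2 : (p : ℤ) ^ k ∣ aj - m := iter_val_congr h1 j m
          obtain ⟨u, hu⟩ := d1
          obtain ⟨v, hv⟩ := d2
          refine ⟨u * v, ?_⟩
          rw [hu, hv, pow_succ]; ring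
        have hterm2 : (p : ℤ) ^ (k + 1) ∣ c * (aj - m) ^ 2 := by
          have d2 : (p : ℤ) ^ k ∣ aj - m := iter_val_congr h1 j m
          obtain ⟨v, hv⟩ := d2
          have : (p : ℤ) ^ (k + 1) ∣ (aj - m) ^ 2 := by
            rw [hv, mul_pow, ← pow_mul]
            exact Dvd.dvd.mul_right (pow_dvd_pow _ (by omega)) _
          exact Dvd.dvd.mul_left this c
        have := dvd_add hterm1 hterm2
        have heq : (g.eval aj - aj) - e
            = ((derivative g).eval m - 1) * (aj - m) + c * (aj - m) ^ 2 := by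
          rw [he]
          linarith [hc]
        rw [heq]
        exact this
      have := dvd_add ih hdiff
      convert this using 1 <;> try rfl
      push_cast
      ring
  have hfinal := key p
  have hpe : (p : ℤ) ^ (k + 1) ∣ (p : ℤ) * e := by
    obtain ⟨v, hv⟩ := h1 m
    rw [he, hv, pow_succ]
    exact ⟨v, by ring⟩
  have := dvd_add hfinal hpe
  convert this using 1 <;> try rfl
  push_cast
  ring

lemma pcomp_der {g : ℤ[X]}
    (h2 : ∀ m : ℤ, (p : ℤ) ∣ (derivative g).eval m - 1) :
    ∀ m : ℤ, (p : ℤ) ∣ (derivative (iterComp g p)).eval m - 1 :=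
  iter_der_congr h2 p

/-- The kernel of `θ` is a `p`-group. -/
lemma ker_theta_pgroup (hn : 2 ≤ n) : IsPGroup p (theta (p := p) (n := n) hn).ker := by
  intro g
  obtain ⟨⟨σ, hσmem⟩, hker⟩ := g
  rw [MonoidHom.mem_ker] at hker
  have hred : redP hn ⟨σ, hσmem⟩ = 1 := by
    have := congrArg SemidirectProduct.right hker
    simpa [theta] using this
  have hderu : ∀ x : ZMod p, derU hn ⟨σ, hσmem⟩ x = 1 := by
    intro x
    have := congrArg SemidirectProduct.left hker
    have h2 : (fun y => derU hn ⟨σ, hσmem⟩ ((redP hn ⟨σ, hσmem⟩).symm y)) = (1 : Wgp p).left := by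
      exact this
    have h3 := congrFun h2 (redP hn ⟨σ, hσmem⟩ x)
    rw [Equiv.symm_apply_apply] at h3
    rw [h3]; rfl
  set f : ℤ[X] := pf (⟨σ, hσmem⟩ : polyPermGroup p n) with hf
  have h1 : ∀ m : ℤ, (p : ℤ) ^ 1 ∣ f.eval m - m := by
    intro m
    have hx : red1 (⟨σ, hσmem⟩ : polyPermGroup p n) ((m : ZMod p)) = ((m : ZMod p)) := by
      have := congrArg (fun (e : Equiv.Perm (ZMod p)) => e ((m : ZMod p))) hred
      simpa using this
    rw [red1, ← hf, aeval_intCast] at hx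
    have : (((f.eval m - m : ℤ)) : ZMod p) = 0 := by push_cast; rw [hx]; ring
    rw [ZMod.intCast_zmod_eq_zero_iff_dvd] at this
    simpa using this
  have h2 : ∀ m : ℤ, (p : ℤ) ∣ (derivative f).eval m - 1 := by
    intro m
    have hx := hderu ((m : ZMod p))
    have hval : aeval ((m : ZMod p)) (derivative f) = 1 := by
      have := congrArg (Units.val) hx
      rw [derU_val] at this
      rw [← hf] at this
      simpa using this
    rw [aeval_intCast] at hval
    have : (((derivative f).eval m - 1 : ℤ) : ZMod p) = 0 := by push_cast; rw [hval]; ring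
    rw [ZMod.intCast_zmod_eq_zero_iff_dvd] at this
    simpa using this
  -- iterate
  let G : ℕ → ℤ[X] := fun j => Nat.rec f (fun _ g => iterComp g p) j
  have hG0 : G 0 = f := rfl
  have hGsucc : ∀ j, G (j + 1) = iterComp (G j) p := fun _ => rfl
  have main : ∀ j : ℕ, (∀ m : ℤ, (p : ℤ) ^ (j + 1) ∣ (G j).eval m - m)
      ∧ (∀ m : ℤ, (p : ℤ) ∣ (derivative (G j)).eval m - 1)
      ∧ (∀ x : ZMod (p ^ n), (σ ^ (p ^ j)) x = aeval x (G j)) := by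
    intro j
    induction j with
    | zero =>
      refine ⟨by simpa [hG0] using h1, by simpa [hG0] using h2, ?_⟩
      intro x
      rw [hG0, pow_zero, pow_one]
      exact pf_spec (⟨σ, hσmem⟩ : polyPermGroup p n) x
    | succ j ih =>
      obtain ⟨ih1, ih2, ih3⟩ := ih
      refine ⟨?_, ?_, ?_⟩
      · intro m
        rw [hGsucc]
        exact pcomp_step (by omega) ih1 ih2 m
      · intro m
        rw [hGsucc]
        exact pcomp_der ih2 m
      · intro x
        rw [hGsucc]
        have hpow : σ ^ (p ^ (j + 1)) = (σ ^ (p ^ j)) ^ p := by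
          rw [← pow_mul, pow_succ]
        rw [hpow]
        exact iterComp_aeval (σ ^ (p ^ j)) (G j) ih3 p x
  refine ⟨n - 1, ?_⟩
  have hGid : ∀ x : ZMod (p ^ n), aeval x (G (n - 1)) = x := by
    intro x
    obtain ⟨m, rfl⟩ := ZMod.intCast_surjective x
    rw [aeval_intCast]
    have hdvd := (main (n - 1)).1 m
    rw [show (n - 1) + 1 = n by omega] at hdvd
    have : (((G (n-1)).eval m - m : ℤ) : ZMod (p ^ n)) = 0 := by
      rw [ZMod.intCast_zmod_eq_zero_iff_dvd]
      push_cast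
      exact hdvd
    push_cast at this
    linear_combination this
  have hperm : σ ^ (p ^ (n - 1)) = 1 := by
    apply Equiv.ext; intro x
    rw [(main (n - 1)).2.2 x, hGid x]
    rfl
  apply Subtype.ext
  rw [SubmonoidClass.coe_pow]
  apply Subtype.ext
  rw [SubmonoidClass.coe_pow]
  exact hperm

/-! ### The subgroups `Q_{C,φ}` of `W` -/

variable (p) in
/-- The subgroup of `W` corresponding to the pair `(C, φ)`. -/
def Qsub (C : Subgroup (Equiv.Perm (ZMod p))) (φ : ZMod p → (ZMod p)ˣ) :
    Subgroup (Wgp p) where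
  carrier := {w | w.right ∈ C ∧ ∀ x, w.left x = φ x / φ (w.right.symm x)}
  one_mem' := by
    refine ⟨C.one_mem, fun x => ?_⟩
    show (1 : (ZMod p)ˣ) = φ x / φ ((1 : Equiv.Perm (ZMod p)).symm x)
    simp [Equiv.Perm.one_symm]
  mul_mem' := by
    rintro w w' ⟨hw1, hw2⟩ ⟨hw1', hw2'⟩
    refine ⟨by rw [SemidirectProduct.mul_right]; exact C.mul_mem hw1 hw1', fun x => ?_⟩
    have h1 : (w * w').left x = w.left x * w'.left (w.right.symm x) := rfl
    have h2 : (w * w').right.symm x = w'.right.symm (w.right.symm x) := by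
      rw [SemidirectProduct.mul_right]; rfl
    rw [h1, h2, hw2 x, hw2' (w.right.symm x)]
    rw [div_eq_mul_inv, div_eq_mul_inv, div_eq_mul_inv, mul_assoc, inv_mul_cancel_left]
  inv_mem' := by
    rintro w ⟨hw1, hw2⟩
    refine ⟨by rw [SemidirectProduct.inv_right]; exact C.inv_mem hw1, fun x => ?_⟩
    have h1 : (w⁻¹).left x = (w.left (w.right x))⁻¹ := by
      rw [SemidirectProduct.inv_left]; rfl
    have h2 : (w⁻¹).right.symm x = w.right x := by
      rw [SemidirectProduct.inv_right]; rfl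
    rw [h1, h2, hw2 (w.right x)]
    have h3 : w.right.symm (w.right x) = x := w.right.symm_apply_apply x
    rw [h3]
    exact inv_div _ _

lemma mem_Qsub {C : Subgroup (Equiv.Perm (ZMod p))} {φ : ZMod p → (ZMod p)ˣ} {w : Wgp p} :
    w ∈ Qsub p C φ ↔ w.right ∈ C ∧ ∀ x, w.left x = φ x / φ (w.right.symm x) := Iff.rfl

lemma card_Qsub (C : Subgroup (Equiv.Perm (ZMod p))) (φ : ZMod p → (ZMod p)ˣ) :
    Nat.card (Qsub p C φ) = Nat.card C := by
  apply Nat.card_eq_of_bijective (fun w => (⟨w.1.right, w.2.1⟩ : C))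
  constructor
  · rintro ⟨w, hw⟩ ⟨w', hw'⟩ h
    have h' : w.right = w'.right := congrArg Subtype.val h
    apply Subtype.ext
    apply SemidirectProduct.ext
    · funext x
      rw [hw.2 x, hw'.2 x, h']
    · exact h'
  · rintro ⟨c, hc⟩
    exact ⟨⟨⟨fun x => φ x / φ (c.symm x), c⟩, ⟨hc, fun x => rfl⟩⟩, rfl⟩

variable (p) in
/-- `W` is equivalent (as a type) to a product. -/
def wEquiv : Wgp p ≃ (ZMod p → (ZMod p)ˣ) × Equiv.Perm (ZMod p) where
  toFun w := (w.left, w.right)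
  invFun a := ⟨a.1, a.2⟩
  left_inv w := rfl
  right_inv a := rfl

instance : Finite (Wgp p) := Finite.of_equiv _ (wEquiv p).symm

lemma card_Wgp : Nat.card (Wgp p) = (p - 1) ^ p * (Nat.factorial p) := by
  rw [Nat.card_congr (wEquiv p), Nat.card_prod, Nat.card_fun]
  have h1 : Nat.card (ZMod p)ˣ = p - 1 := by
    rw [Nat.card_eq_fintype_card, ZMod.card_units]
  have h2 : Nat.card (ZMod p) = p := by
    rw [Nat.card_eq_fintype_card, ZMod.card]
  have h3 : Nat.card (Equiv.Perm (ZMod p)) = Nat.factorial p := by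
    rw [Nat.card_eq_fintype_card, Fintype.card_perm, ZMod.card]
  rw [h1, h2, h3]

lemma not_p_sq_dvd_card_Wgp : ¬ (p ^ 2 ∣ Nat.card (Wgp p)) := by
  rw [card_Wgp]
  intro hdvd
  have hp : p.Prime := p_prime
  have hp2 := hp.two_le
  have hcop : Nat.Coprime (p ^ 2) ((p - 1) ^ p) := by
    apply Nat.Coprime.pow
    rw [hp.coprime_iff_not_dvd]
    intro h
    have := Nat.le_of_dvd (by omega) h
    omega
  have h2 : p ^ 2 ∣ Nat.factorial p := (Nat.Coprime.dvd_of_dvd_mul_left hcop hdvd)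
  have h3 : Nat.factorial p = p * Nat.factorial (p - 1) := by
    conv_lhs => rw [show p = (p - 1) + 1 by omega]
    rw [Nat.factorial_succ]
    congr 1
    omega
  rw [h3, pow_two] at h2
  have h4 : p ∣ Nat.factorial (p - 1) :=
    (Nat.mul_dvd_mul_iff_left hp.pos).mp h2
  rw [hp.dvd_factorial] at h4
  omega

/-- `Q_{C,φ}` as a Sylow subgroup of `W`, when `C` has order `p`. -/
noncomputable def sylowQ (C : Subgroup (Equiv.Perm (ZMod p))) (φ : ZMod p → (ZMod p)ˣ)
    (hC : Nat.card C = p) : Sylow p (Wgp p) where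
  toSubgroup := Qsub p C φ
  isPGroup' := IsPGroup.of_card (n := 1) (by rw [card_Qsub, hC, pow_one])
  is_maximal' := by
    intro Q' hQ' hle
    have hcard : Nat.card (Qsub p C φ) = p := by rw [card_Qsub, hC]
    obtain ⟨k, hk⟩ := (IsPGroup.iff_card).mp hQ'
    have hdvd : Nat.card Q' ∣ Nat.card (Wgp p) := Subgroup.card_subgroup_dvd_card Q'
    have hdvd2 : Nat.card (Qsub p C φ) ∣ Nat.card Q' := Subgroup.card_dvd_of_le hle
    rw [hcard, hk] at hdvd2
    have hk1 : 1 ≤ k := by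
      by_contra h
      push_neg at h
      interval_cases k
      · simp at hdvd2
        have := (p_prime (p := p)).two_le
        omega
    have hk2 : k < 2 := by
      by_contra h
      push_neg at h
      have : p ^ 2 ∣ Nat.card (Wgp p) := dvd_trans (pow_dvd_pow p h) (hk ▸ hdvd)
      exact not_p_sq_dvd_card_Wgp this
    have hkeq : k = 1 := by omega
    subst hkeq
    exact (Subgroup.eq_of_le_of_card_ge hle (by rw [hk, hcard, pow_one])).symm

/-- The preimage of `Q_{C,φ}` under `θ` is precisely the candidate set. -/
lemma comap_Qsub_eq (hn : 2 ≤ n) (C : Subgroup (Equiv.Perm (ZMod p)))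
    (φ : ZMod p → (ZMod p)ˣ) :
    ((Subgroup.comap (theta (p := p) (n := n) hn) (Qsub p C φ) :
        Subgroup (polyPermGroup p n)) : Set (polyPermGroup p n))
      = sylowCandidateGn p n C φ := by
  ext σ
  simp only [SetLike.mem_coe, Subgroup.mem_comap, mem_Qsub]
  constructor
  · rintro ⟨hright, hleft⟩
    refine ⟨pf σ, pf_spec σ, redP hn σ, hright, fun x => rfl, fun x => ?_⟩
    have h := hleft (redP hn σ x)
    have h1 : (theta hn σ).right.symm ((redP hn σ) x) = x := by
      show (redP hn σ).symm ((redP hn σ) x) = x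
      exact (redP hn σ).symm_apply_apply x
    have h2 : (theta hn σ).left ((redP hn σ) x) = derU hn σ x := by
      show derU hn σ ((redP hn σ).symm ((redP hn σ) x)) = derU hn σ x
      rw [(redP hn σ).symm_apply_apply x]
    rw [h1, h2] at h
    have := congrArg Units.val h
    rw [derU_val] at this
    exact this
  · rintro ⟨f, hf, c, hcC, hcval, hcder⟩
    have hredc : redP hn σ = c := by
      apply Equiv.ext; intro x
      rw [redP_apply, red1_eq hn σ hf, hcval]
    have hright : (theta hn σ).right ∈ C := by
      show redP hn σ ∈ C
      rw [hredc]; exact hcC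
    refine ⟨hright, fun x => ?_⟩
    show derU hn σ ((redP hn σ).symm x) = φ x / φ ((redP hn σ).symm x)
    rw [hredc]
    apply Units.ext
    rw [derU_val, der1_eq hn σ hf, hcder (c.symm x)]
    rw [c.apply_symm_apply x]

/-- The Sylow subgroup of `G_n` corresponding to `(C, φ)`. -/
noncomputable def sylowGn (hn : 2 ≤ n) (C : Subgroup (Equiv.Perm (ZMod p)))
    (φ : ZMod p → (ZMod p)ˣ) (hC : Nat.card C = p) : Sylow p (polyPermGroup p n) :=
  (sylowQ C φ hC).comapOfKerIsPGroup (theta hn) (ker_theta_pgroup hn)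
    (by rw [MonoidHom.range_eq_top.mpr (theta_surjective hn)]; exact le_top)

lemma coe_sylowGn (hn : 2 ≤ n) (C : Subgroup (Equiv.Perm (ZMod p)))
    (φ : ZMod p → (ZMod p)ˣ) (hC : Nat.card C = p) :
    ((sylowGn hn C φ hC : Subgroup (polyPermGroup p n)) : Set (polyPermGroup p n))
      = sylowCandidateGn p n C φ := by
  rw [show (sylowGn hn C φ hC : Subgroup (polyPermGroup p n))
      = Subgroup.comap (theta hn) (Qsub p C φ) from
    Sylow.coe_comapOfKerIsPGroup _ _ _ _]
  exact comap_Qsub_eq hn C φ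

/-! ### Helpers for parts 2 and 3 -/

omit [NeZero (p ^ n)] in
lemma unit_pow_p (u : (ZMod p)ˣ) : u ^ p = u := by
  have hp2 := (p_prime (p := p)).two_le
  have h3 : u ^ (p - 1) = 1 := by
    rw [← ZMod.card_units p]
    exact pow_card_eq_one
  calc u ^ p = u ^ (p - 1 + 1) := by rw [Nat.sub_add_cancel (by omega : 1 ≤ p)]
    _ = u ^ (p - 1) * u := pow_succ u (p - 1)
    _ = u := by rw [h3, one_mul]

omit [NeZero (p ^ n)] in
lemma pow_left_prod (v : Wgp p) (m : ℕ) :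
    ∀ x : ZMod p, (v ^ m).left x
      = ∏ j ∈ Finset.range m, v.left ((v.right.symm ^ j) x) := by
  induction m with
  | zero => intro x; simp
  | succ m ih =>
    intro x
    have h1 : (v ^ (m + 1)).left x = v.left x * (v ^ m).left (v.right.symm x) := by
      have : v ^ (m + 1) = v * v ^ m := pow_succ' v m
      rw [this]
      rfl
    rw [h1, ih (v.right.symm x)]
    rw [Finset.prod_range_succ']
    rw [mul_comm]
    congr 1

omit [NeZero (p ^ n)] in
/-- The norm condition: if `w^p = 1` in `W` then the product of `d = w.left ∘ w.right`
along any forward orbit of length `p` is `1`. -/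
lemma norm_one {w : Wgp p} (hw : w ^ p = 1) (x : ZMod p) :
    ∏ j ∈ Finset.range p, w.left (w.right ((w.right ^ j) x)) = 1 := by
  have hv : (w⁻¹) ^ p = 1 := by rw [inv_pow, hw, inv_one]
  have h1 := pow_left_prod (w⁻¹) p x
  rw [hv] at h1
  have h2 : ∀ j : ℕ, (w⁻¹).left (((w⁻¹).right.symm ^ j) x)
      = (w.left (w.right ((w.right ^ j) x)))⁻¹ := by
    intro j
    have hr : (w⁻¹).right.symm = w.right := by
      rw [SemidirectProduct.inv_right]
      rfl
    have hl : ∀ y, (w⁻¹).left y = (w.left (w.right y))⁻¹ := by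
      intro y
      rw [SemidirectProduct.inv_left]
      rfl
    rw [hr, hl]
  have h3 : (1 : (ZMod p)ˣ) = ∏ j ∈ Finset.range p, (w.left (w.right ((w.right ^ j) x)))⁻¹ := by
    rw [← Finset.prod_congr rfl (fun j _ => h2 j)]
    exact h1
  rw [Finset.prod_inv_distrib] at h3
  have := congrArg (fun u => u⁻¹) h3
  simpa using this.symm

omit [NeZero (p ^ n)] in
/-- Construction of `φ` from a cocycle `d` along an order-`p` permutation. -/
lemma phi_exists {w : Wgp p} (hword : orderOf w = p) (hcord : orderOf w.right = p) :
    ∃ φ : ZMod p → (ZMod p)ˣ, ∀ x, w.left x = φ x / φ (w.right.symm x) := by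
  have hwp : w ^ p = 1 := by
    have h : orderOf w ∣ p := by rw [hword]
    exact orderOf_dvd_iff_pow_eq_one.mp h
  have hcp : w.right ^ p = 1 := by
    have h : orderOf w.right ∣ p := by rw [hcord]
    exact orderOf_dvd_iff_pow_eq_one.mp h
  set c : Equiv.Perm (ZMod p) := w.right with hc
  set d : ZMod p → (ZMod p)ˣ := fun y => w.left (c y) with hd
  have hnorm : ∀ x, ∏ j ∈ Finset.range p, d ((c ^ j) x) = 1 := fun x => norm_one hwp x
  refine ⟨fun y => ∏ i ∈ Finset.range p, (d ((c ^ i) y)) ^ i, fun x => ?_⟩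
  set φ : ZMod p → (ZMod p)ˣ := fun y => ∏ i ∈ Finset.range p, (d ((c ^ i) y)) ^ i with hφ
  have step : ∀ y, φ (c y) = d y * φ y := by
    intro y
    set e : ℕ → (ZMod p)ˣ := fun i => d ((c ^ i) y) with he
    have hphiy : φ y = ∏ i ∈ Finset.range p, e i ^ i := rfl
    have hep : e p = e 0 := by
      show d ((c ^ p) y) = d ((c ^ 0) y)
      rw [hcp, pow_zero]
    have hshift : ∀ i, d ((c ^ i) (c y)) = e (i + 1) := by
      intro i
      show d ((c ^ i) (c y)) = d ((c ^ (i + 1)) y)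
      congr 1
    have hlhs : φ (c y) = ∏ i ∈ Finset.range p, e (i + 1) ^ i := by
      show (∏ i ∈ Finset.range p, (d ((c ^ i) (c y))) ^ i) = _
      exact Finset.prod_congr rfl (fun i _ => by rw [hshift i])
    have hA : ∏ i ∈ Finset.range p, e (i + 1) ^ (i + 1) = φ y * e 0 := by
      have h1 := Finset.prod_range_succ' (fun i => e i ^ i) p
      have h2 := Finset.prod_range_succ (fun i => e i ^ i) p
      have h3 : e p ^ p = e 0 := by rw [hep]; exact unit_pow_p (e 0)
      have h4 : (∏ i ∈ Finset.range p, e (i + 1) ^ (i + 1)) * 1 = φ y * e 0 := by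
        calc (∏ i ∈ Finset.range p, e (i + 1) ^ (i + 1)) * 1
            = (∏ i ∈ Finset.range p, e (i + 1) ^ (i + 1)) * (e 0 ^ 0) := by norm_num
          _ = ∏ i ∈ Finset.range (p + 1), e i ^ i := h1.symm
          _ = (∏ i ∈ Finset.range p, e i ^ i) * e p ^ p := h2
          _ = φ y * e 0 := by rw [h3, hphiy]
      simpa using h4
    have hB : ∏ i ∈ Finset.range p, e (i + 1) = 1 := by
      have h1 := Finset.prod_range_succ' (fun i => e i) p
      have h2 := Finset.prod_range_succ (fun i => e i) p
      have hnorme : ∏ i ∈ Finset.range p, e i = 1 := hnorm y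
      have h3 : (∏ i ∈ Finset.range p, e (i + 1)) * e 0 = 1 * e 0 := by
        calc (∏ i ∈ Finset.range p, e (i + 1)) * e 0
            = ∏ i ∈ Finset.range (p + 1), e i := h1.symm
          _ = (∏ i ∈ Finset.range p, e i) * e p := h2
          _ = 1 * e 0 := by rw [hnorme, hep]
      exact mul_right_cancel h3
    calc φ (c y) = ∏ i ∈ Finset.range p, e (i + 1) ^ i := hlhs
      _ = ∏ i ∈ Finset.range p, (e (i + 1) ^ (i + 1) * (e (i + 1))⁻¹) := by
          apply Finset.prod_congr rfl
          intro i _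
          rw [pow_succ]
          group
      _ = (∏ i ∈ Finset.range p, e (i + 1) ^ (i + 1))
            * (∏ i ∈ Finset.range p, e (i + 1))⁻¹ := by
          rw [Finset.prod_mul_distrib, Finset.prod_inv_distrib]
      _ = (φ y * e 0) * 1 := by rw [hA, hB, inv_one]
      _ = d y * φ y := by
          have h0 : e 0 = d y := by
            show d ((c ^ 0) y) = d y
            rw [pow_zero]
            rfl
          rw [h0, mul_one, mul_comm]
  have h1 := step (c.symm x)
  rw [c.apply_symm_apply x] at h1
  have h2 : d (c.symm x) = w.left x := by
    show w.left (c (c.symm x)) = w.left x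
    rw [c.apply_symm_apply x]
  rw [h2] at h1
  rw [h1, mul_div_assoc, div_self', mul_one]

omit [NeZero (p ^ n)] in
lemma exists_ne_one_of_card {C : Subgroup (Equiv.Perm (ZMod p))}
    (hC : Nat.card C = p) : ∃ c ∈ C, c ≠ 1 := by
  by_contra h
  push_neg at h
  have : C = ⊥ := (Subgroup.eq_bot_iff_forall C).mpr h
  rw [this] at hC
  simp at hC
  have := (p_prime (p := p)).two_le
  omega

omit [NeZero (p ^ n)] in
lemma orderOf_eq_p_of_mem {C : Subgroup (Equiv.Perm (ZMod p))} (hC : Nat.card C = p)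
    {c : Equiv.Perm (ZMod p)} (hc : c ∈ C) (hne : c ≠ 1) : orderOf c = p := by
  have h1 : orderOf (⟨c, hc⟩ : C) ∣ Nat.card C := orderOf_dvd_natCard _
  rw [hC] at h1
  rw [← Subgroup.orderOf_coe (⟨c, hc⟩ : C)] at h1
  rcases (p_prime (p := p)).eq_one_or_self_of_dvd _ h1 with h | h
  · exfalso
    exact hne (orderOf_eq_one_iff.mp h)
  · exact h

omit [NeZero (p ^ n)] in
lemma transitive_of_orderOf_eq_p {c : Equiv.Perm (ZMod p)} (hord : orderOf c = p) :
    ∀ y : ZMod p, ∃ m : ℤ, (c ^ m) 0 = y := by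
  classical
  have hp : p.Prime := p_prime
  have hcyc : c.IsCycle := by
    apply Equiv.Perm.isCycle_of_prime_order
    · rw [hord]; exact hp
    · rw [hord]
      have h1 : c.support.card ≤ Fintype.card (ZMod p) := Finset.card_le_univ _
      rw [ZMod.card] at h1
      have := hp.pos
      omega
  have hsupp : c.support = Finset.univ := by
    apply Finset.eq_univ_of_card
    rw [← hcyc.orderOf, hord, ZMod.card]
  have hmove : ∀ z : ZMod p, c z ≠ z := by
    intro z
    rw [← Equiv.Perm.mem_support, hsupp]
    exact Finset.mem_univ z
  obtain ⟨x, hx, hall⟩ := hcyc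
  intro y
  have h0 := hall (hmove 0)
  have hy := hall (hmove y)
  exact h0.symm.trans hy

omit [NeZero (p ^ n)] in
lemma exists_order_p_perm : ∃ c : Equiv.Perm (ZMod p), orderOf c = p := by
  have hp : p.Prime := p_prime
  refine ⟨Equiv.addLeft (1 : ZMod p), ?_⟩
  have hpow : ∀ (m : ℕ) (x : ZMod p), ((Equiv.addLeft (1 : ZMod p)) ^ m) x = (m : ZMod p) + x := by
    intro m
    induction m with
    | zero => intro x; simp
    | succ m ih =>
      intro x
      have : ((Equiv.addLeft (1 : ZMod p)) ^ (m + 1)) x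
          = ((Equiv.addLeft (1 : ZMod p)) ^ m) ((Equiv.addLeft (1 : ZMod p)) x) := by
        rw [pow_succ]
        rfl
      rw [this, ih]
      simp [Equiv.addLeft]
      push_cast
      ring
  have hpone : (Equiv.addLeft (1 : ZMod p)) ^ p = 1 := by
    apply Equiv.ext
    intro x
    rw [hpow p x]
    simp
  have hne : (Equiv.addLeft (1 : ZMod p)) ≠ 1 := by
    intro h
    have := congrArg (fun (e : Equiv.Perm (ZMod p)) => e 0) h
    simp [Equiv.addLeft] at this
  have hdvd : orderOf (Equiv.addLeft (1 : ZMod p)) ∣ p := orderOf_dvd_of_pow_eq_one hpone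
  rcases hp.eq_one_or_self_of_dvd _ hdvd with h | h
  · exact absurd (orderOf_eq_one_iff.mp h) hne
  · exact h

/-! ### Parts 2 and 3 -/

lemma part2 (hn : 2 ≤ n) (P : Sylow p (polyPermGroup p n)) :
    ∃ (C : Subgroup (Equiv.Perm (ZMod p))) (φ : ZMod p → (ZMod p)ˣ),
      Nat.card C = p ∧
      ((P : Subgroup (polyPermGroup p n)) : Set (polyPermGroup p n))
        = sylowCandidateGn p n C φ := by
  have hp := p_prime (p := p)
  have hsup : IsPGroup p ((P : Subgroup (polyPermGroup p n)) ⊔ (theta hn).ker : Subgroup (polyPermGroup p n)) :=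
    IsPGroup.to_sup_of_normal_right P.isPGroup' (ker_theta_pgroup hn)
  have hsupP : ((P : Subgroup (polyPermGroup p n)) ⊔ (theta hn).ker) = P :=
    P.is_maximal' hsup le_sup_left
  have hkerP : (theta hn).ker ≤ (P : Subgroup (polyPermGroup p n)) := hsupP ▸ le_sup_right
  set Qb := Subgroup.map (theta hn) (P : Subgroup (polyPermGroup p n)) with hQb
  have hQp : IsPGroup p Qb := P.isPGroup'.map _
  obtain ⟨k, hk⟩ := IsPGroup.iff_card.mp hQp
  have hklt : k < 2 := by
    by_contra h
    push_neg at h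
    have hd : p ^ 2 ∣ Nat.card (Wgp p) :=
      dvd_trans (pow_dvd_pow p h) (hk ▸ Subgroup.card_subgroup_dvd_card Qb)
    exact not_p_sq_dvd_card_Wgp hd
  have hk1 : k = 1 := by
    rcases (by omega : k = 0 ∨ k = 1) with h0 | h1
    · exfalso
      rw [h0, pow_zero] at hk
      have hQbot : Qb = ⊥ := Subgroup.card_eq_one.mp hk
      have hPker : (P : Subgroup (polyPermGroup p n)) ≤ (theta hn).ker := by
        intro g hg
        rw [MonoidHom.mem_ker]
        have hmem : theta hn g ∈ Qb := Subgroup.mem_map_of_mem _ hg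
        rwa [hQbot, Subgroup.mem_bot] at hmem
      obtain ⟨c₁, hc₁⟩ := exists_order_p_perm (p := p)
      have hC1 : Nat.card (Subgroup.zpowers c₁) = p := by rw [Nat.card_zpowers, hc₁]
      have hQ1p : IsPGroup p (Qsub p (Subgroup.zpowers c₁) (fun _ => 1)) :=
        IsPGroup.of_card (n := 1) (by rw [card_Qsub, hC1, pow_one])
      have hBp : IsPGroup p
          (Subgroup.comap (theta hn) (Qsub p (Subgroup.zpowers c₁) (fun _ => 1))) :=
        hQ1p.comap_of_ker_isPGroup _ (ker_theta_pgroup hn)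
      have hPB : (P : Subgroup (polyPermGroup p n))
          ≤ Subgroup.comap (theta hn) (Qsub p (Subgroup.zpowers c₁) (fun _ => 1)) := by
        refine hPker.trans ?_
        intro g hg
        rw [MonoidHom.mem_ker] at hg
        rw [Subgroup.mem_comap, hg]
        exact (Qsub p _ _).one_mem
      have hBeq := P.is_maximal' hBp hPB
      obtain ⟨σ₁, hσ₁⟩ := theta_surjective hn ⟨fun _ => 1, c₁⟩
      have hmem : σ₁ ∈ Subgroup.comap (theta hn) (Qsub p (Subgroup.zpowers c₁) (fun _ => 1)) := by
        rw [Subgroup.mem_comap, hσ₁]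
        exact ⟨Subgroup.mem_zpowers c₁, fun x => by simp⟩
      have hker : σ₁ ∈ (theta hn).ker := hPker (hBeq ▸ hmem)
      rw [MonoidHom.mem_ker, hσ₁] at hker
      have hc1 : c₁ = 1 := congrArg SemidirectProduct.right hker
      rw [hc1, orderOf_one] at hc₁
      have := hp.two_le
      omega
    · exact h1
  have hcardQb : Nat.card Qb = p := by rw [hk, hk1, pow_one]
  have hQbne : Qb ≠ ⊥ := by
    intro h
    rw [h, Subgroup.card_bot] at hcardQb
    have := hp.two_le
    omega
  obtain ⟨w, hwQb, hwne⟩ : ∃ w ∈ Qb, w ≠ 1 := by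
    by_contra h
    push_neg at h
    exact hQbne ((Subgroup.eq_bot_iff_forall Qb).mpr h)
  have hword : orderOf w = p := by
    have h1 : orderOf (⟨w, hwQb⟩ : Qb) ∣ Nat.card Qb := orderOf_dvd_natCard _
    rw [hcardQb] at h1
    rw [← Subgroup.orderOf_coe (⟨w, hwQb⟩ : Qb)] at h1
    rcases hp.eq_one_or_self_of_dvd _ h1 with h | h
    · exact absurd (orderOf_eq_one_iff.mp h) hwne
    · exact h
  have hwp : w ^ p = 1 := by
    have hdvd : orderOf w ∣ p := by rw [hword]
    exact orderOf_dvd_iff_pow_eq_one.mp hdvd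
  have hcne : w.right ≠ 1 := by
    intro hc1
    apply hwne
    have hleft : ∀ x, (w ^ p).left x = (w.left x) ^ p := by
      intro x
      rw [pow_left_prod w p x]
      have hfix : ∀ j : ℕ, (w.right.symm ^ j) x = x := by
        intro j
        rw [hc1]
        simp [Equiv.Perm.one_symm]
      rw [Finset.prod_congr rfl (fun j _ => by rw [hfix j])]
      rw [Finset.prod_const, Finset.card_range]
    have hl1 : ∀ x, w.left x = 1 := by
      intro x
      have hx := hleft x
      rw [hwp] at hx
      have h2 : (1 : (ZMod p)ˣ) = (w.left x) ^ p := hx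
      rw [unit_pow_p] at h2
      exact h2.symm
    apply SemidirectProduct.ext
    · funext x
      simp [hl1 x]
    · exact hc1
  have hcord : orderOf w.right = p := by
    have hr : SemidirectProduct.rightHom w = w.right := rfl
    have hdvd : orderOf w.right ∣ orderOf w := by
      rw [← hr]
      exact orderOf_map_dvd SemidirectProduct.rightHom w
    rw [hword] at hdvd
    rcases hp.eq_one_or_self_of_dvd _ hdvd with h | h
    · exact absurd (orderOf_eq_one_iff.mp h) hcne
    · exact h
  obtain ⟨φw, hφw⟩ := phi_exists hword hcord
  have hwmem : w ∈ Qsub p (Subgroup.zpowers w.right) φw := ⟨Subgroup.mem_zpowers _, hφw⟩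
  have hCcard : Nat.card (Subgroup.zpowers w.right) = p := by rw [Nat.card_zpowers, hcord]
  have h1 : Subgroup.zpowers w ≤ Qb := Subgroup.zpowers_le.mpr hwQb
  have h2 : Subgroup.zpowers w = Qb :=
    Subgroup.eq_of_le_of_card_ge h1 (by rw [hcardQb, Nat.card_zpowers, hword])
  have h3 : Subgroup.zpowers w ≤ Qsub p (Subgroup.zpowers w.right) φw :=
    Subgroup.zpowers_le.mpr hwmem
  have h4 : Subgroup.zpowers w = Qsub p (Subgroup.zpowers w.right) φw :=
    Subgroup.eq_of_le_of_card_ge h3 (by rw [card_Qsub, hCcard, Nat.card_zpowers, hword])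
  have hQbQ : Qb = Qsub p (Subgroup.zpowers w.right) φw := h2 ▸ h4
  have hPeq : (P : Subgroup (polyPermGroup p n)) = Subgroup.comap (theta hn) Qb := by
    rw [hQb, Subgroup.comap_map_eq, sup_eq_left.mpr hkerP]
  refine ⟨Subgroup.zpowers w.right, φw, hCcard, ?_⟩
  rw [← comap_Qsub_eq hn _ φw, ← hQbQ, ← hPeq]

lemma part3 (hn : 2 ≤ n) (C D : Subgroup (Equiv.Perm (ZMod p)))
    (φ ψ : ZMod p → (ZMod p)ˣ) (hC : Nat.card C = p) (hD : Nat.card D = p) :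
    sylowCandidateGn p n C φ = sylowCandidateGn p n D ψ ↔
      C = D ∧ ∃ k : (ZMod p)ˣ, ∀ x : ZMod p, φ x = k * ψ x := by
  constructor
  · intro hset
    have hQ : Qsub p C φ = Qsub p D ψ := by
      have hcc : Subgroup.comap (theta hn) (Qsub p C φ)
          = Subgroup.comap (theta hn) (Qsub p D ψ) := by
        apply SetLike.ext'
        rw [comap_Qsub_eq hn C φ, comap_Qsub_eq hn D ψ]
        exact hset
      have := congrArg (Subgroup.map (theta hn)) hcc
      rwa [Subgroup.map_comap_eq_self_of_surjective (theta_surjective hn),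
        Subgroup.map_comap_eq_self_of_surjective (theta_surjective hn)] at this
    have hCD : C = D := by
      ext c
      constructor
      · intro hc
        have hmem : (⟨fun x => φ x / φ (c.symm x), c⟩ : Wgp p) ∈ Qsub p C φ :=
          ⟨hc, fun x => rfl⟩
        rw [hQ] at hmem
        exact hmem.1
      · intro hc
        have hmem : (⟨fun x => ψ x / ψ (c.symm x), c⟩ : Wgp p) ∈ Qsub p D ψ :=
          ⟨hc, fun x => rfl⟩
        rw [← hQ] at hmem
        exact hmem.1
    refine ⟨hCD, ?_⟩
    have hrel : ∀ c ∈ C, ∀ x, φ x / φ (c.symm x) = ψ x / ψ (c.symm x) := by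
      intro c hc x
      have hmem : (⟨fun x => φ x / φ (c.symm x), c⟩ : Wgp p) ∈ Qsub p C φ :=
        ⟨hc, fun x => rfl⟩
      rw [hQ] at hmem
      exact hmem.2 x
    obtain ⟨c₀, hc₀C, hc₀ne⟩ := exists_ne_one_of_card hC
    have hord : orderOf c₀ = p := orderOf_eq_p_of_mem hC hc₀C hc₀ne
    refine ⟨φ 0 / ψ 0, fun y => ?_⟩
    obtain ⟨m, hm⟩ := transitive_of_orderOf_eq_p hord y
    have hzmem : ((c₀ ^ m)⁻¹ : Equiv.Perm (ZMod p)) ∈ C := C.inv_mem (C.zpow_mem hc₀C m)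
    have hkey := hrel _ hzmem 0
    have hsymm : ((c₀ ^ m)⁻¹ : Equiv.Perm (ZMod p)).symm (0 : ZMod p) = y := by
      have : ((c₀ ^ m)⁻¹ : Equiv.Perm (ZMod p)).symm = c₀ ^ m := by
        rw [← Equiv.Perm.inv_def, inv_inv]
      rw [this]
      exact hm
    rw [hsymm] at hkey
    -- hkey : φ 0 / φ y = ψ 0 / ψ y
    have hcross : φ 0 * ψ y = ψ 0 * φ y := div_eq_div_iff_mul_eq_mul.mp hkey
    calc φ y = (ψ 0 * φ y) / ψ 0 := by rw [mul_comm, mul_div_assoc, div_self', mul_one]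
      _ = (φ 0 * ψ y) / ψ 0 := by rw [hcross]
      _ = φ 0 / ψ 0 * ψ y := by rw [mul_comm, mul_div_assoc, mul_comm]
  · rintro ⟨rfl, k, hk⟩
    have hQ : Qsub p C φ = Qsub p C ψ := by
      ext v
      rw [mem_Qsub, mem_Qsub]
      have hratio : ∀ x y : ZMod p, φ x / φ y = ψ x / ψ y := by
        intro x y
        rw [hk x, hk y, mul_div_mul_left_eq_div]
      constructor
      · rintro ⟨hh1, hh2⟩
        exact ⟨hh1, fun x => by rw [hh2 x, hratio]⟩
      · rintro ⟨hh1, hh2⟩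
        exact ⟨hh1, fun x => by rw [hh2 x, ← hratio]⟩
    rw [← comap_Qsub_eq hn C φ, ← comap_Qsub_eq hn C ψ, hQ]

end SGn

/-- For `n ≥ 2`: for every cyclic subgroup `C` of order `p` of `Sym(ℤ/pℤ)` and
every `φ : ℤ/pℤ → ℤ/pℤ∖{0}`, the set `S_{(C,φ)}` is a Sylow `p`-subgroup of
`G_n`; every Sylow `p`-subgroup of `G_n` is of this form; and
`S_{(C,φ)} = S_{(D,ψ)}` if and only if `C = D` and `φ = k·ψ` for a nonzero
constant `k`.  Hence the Sylow `p`-subgroups of `G_n` correspond bijectively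
to pairs `(C, φ̄)` with `φ̄` the class of `φ` modulo nonzero constants. -/
theorem sylow_subgroups_of_Gn_description (p : ℕ) [Fact p.Prime]
    (n : ℕ) (hn : 2 ≤ n) :
    (∀ (C : Subgroup (Equiv.Perm (ZMod p))) (φ : ZMod p → (ZMod p)ˣ),
      Nat.card C = p →
        ∃ P : Sylow p (polyPermGroup p n),
          ((P : Subgroup (polyPermGroup p n)) : Set (polyPermGroup p n)) =
            sylowCandidateGn p n C φ) ∧
    (∀ P : Sylow p (polyPermGroup p n),
      ∃ (C : Subgroup (Equiv.Perm (ZMod p))) (φ : ZMod p → (ZMod p)ˣ),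
        Nat.card C = p ∧
        ((P : Subgroup (polyPermGroup p n)) : Set (polyPermGroup p n)) =
          sylowCandidateGn p n C φ) ∧
    (∀ (C D : Subgroup (Equiv.Perm (ZMod p))) (φ ψ : ZMod p → (ZMod p)ˣ),
      Nat.card C = p → Nat.card D = p →
        (sylowCandidateGn p n C φ = sylowCandidateGn p n D ψ ↔
          C = D ∧ ∃ k : (ZMod p)ˣ, ∀ x : ZMod p, φ x = k * ψ x)) := by
  refine ⟨?_, ?_, ?_⟩
  · intro C φ hC
    exact ⟨SGn.sylowGn hn C φ hC, SGn.coe_sylowGn hn C φ hC⟩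
  · intro P
    exact SGn.part2 hn P
  · intro C D φ ψ hC hD
    exact SGn.part3 hn C D φ ψ hC hD
end
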